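/- arXiv:1611.04902 — 8 statements merged into one kernel-verified Lean document; each statement's English description precedes it below -/
import Mathlib

section
/- (Discrete Trudinger–Moser bound) For any α ≥ 0 and β ∈ ℝ there exist constants C₁, C₂ depending only on G, p, α, β such that for all φ : V → ℝ with Σ_{i∼j} ω_{ij}|φ_j - φ_i|^p ≤ 1 and Σ_i μ_i φ_i = 0, one has ‖φ‖_∞ ≤ C₁ and Σ_{i ∈ V} μ_i e^{β |φ_i|^α} ≤ C₂. -/
open Finset Real

/-- The discrete `p`-Laplacian on a weighted graph with adjacency `A`,
edge weights `ω` and vertex measure `μ`: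
`(Δ_p f)_i = (1/μ_i) Σ_{j ∼ i} ω_{ij} |f_j - f_i|^{p-2} (f_j - f_i)`. -/
noncomputable def pLap {V : Type*} [Fintype V] (p : ℝ) (A : V → V → Prop) [DecidableRel A]
    (ω : V → V → ℝ) (μ : V → ℝ) (f : V → ℝ) : V → ℝ :=
  fun i => (1 / μ i) * ∑ j, if A i j then ω i j * |f j - f i| ^ (p - 2) * (f j - f i) else 0

/-- Sum of a symmetric function `g` over the (unordered) edges of the graph:
`Σ_{i∼j} g_{ij} = (1/2) Σ_i Σ_{j : A i j} g i j`. -/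
noncomputable def edgeSum {V : Type*} [Fintype V] (A : V → V → Prop) [DecidableRel A]
    (g : V → V → ℝ) : ℝ :=
  (1 / 2) * ∑ i, ∑ j, if A i j then g i j else 0

/-- discrete Trudinger–Moser type bounds. -/
theorem stmt5 {V : Type*} [Fintype V] [Nonempty V] (p : ℝ) (hp : 1 < p)
    (A : V → V → Prop) [DecidableRel A] (hA : Symmetric A)
    (ω : V → V → ℝ) (hωsymm : ∀ i j, ω i j = ω j i) (hωpos : ∀ i j, A i j → 0 < ω i j)
    (μ : V → ℝ) (hμ : ∀ i, 0 < μ i)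
    (hconn : ∀ i j : V, Relation.ReflTransGen A i j) (α β : ℝ) (hα : 0 ≤ α) :
    ∃ C₁ C₂ : ℝ, ∀ φ : V → ℝ,
      edgeSum A (fun i j => ω i j * |φ j - φ i| ^ p) ≤ 1 →
      ∑ i, μ i * φ i = 0 →
      (∀ i, |φ i| ≤ C₁) ∧ ∑ i, μ i * Real.exp (β * |φ i| ^ α) ≤ C₂ := by
  have hp0 : (0:ℝ) < p := lt_trans one_pos hp
  -- edge bound
  have hedge : ∀ φ : V → ℝ, edgeSum A (fun i j => ω i j * |φ j - φ i| ^ p) ≤ 1 →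
      ∀ a b, A a b → |φ b - φ a| ≤ (2 / ω a b) ^ (1/p) := by
    intro φ hφ a b hab
    have hωab := hωpos a b hab
    have hnn : ∀ i j : V, 0 ≤ (if A i j then ω i j * |φ j - φ i| ^ p else 0) := by
      intro i j
      split_ifs with h
      · exact mul_nonneg (hωpos i j h).le (Real.rpow_nonneg (abs_nonneg _) p)
      · exact le_refl 0
    have hS : ∑ i, ∑ j, (if A i j then ω i j * |φ j - φ i| ^ p else 0) ≤ 2 := by
      unfold edgeSum at hφ; linarith
    have h1 : (if A a b then ω a b * |φ b - φ a| ^ p else 0) ≤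
        ∑ j, (if A a j then ω a j * |φ j - φ a| ^ p else 0) :=
      Finset.single_le_sum (fun j _ => hnn a j) (Finset.mem_univ b)
    have h2 : ∑ j, (if A a j then ω a j * |φ j - φ a| ^ p else 0) ≤
        ∑ i, ∑ j, (if A i j then ω i j * |φ j - φ i| ^ p else 0) :=
      Finset.single_le_sum (fun i _ => Finset.sum_nonneg (fun j _ => hnn i j))
        (Finset.mem_univ a)
    rw [if_pos hab] at h1
    have ht : |φ b - φ a| ^ p ≤ 2 / ω a b := by
      rw [le_div_iff₀ hωab]
      nlinarith
    have heq : |φ b - φ a| = (|φ b - φ a| ^ p) ^ (1/p) := by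
      rw [← Real.rpow_mul (abs_nonneg _), mul_one_div, div_self hp0.ne', Real.rpow_one]
    rw [heq]
    exact Real.rpow_le_rpow (Real.rpow_nonneg (abs_nonneg _) p) ht (by positivity)
  -- per-pair constants
  have key : ∀ i j : V, ∃ c : ℝ, ∀ φ : V → ℝ,
      edgeSum A (fun i j => ω i j * |φ j - φ i| ^ p) ≤ 1 → |φ j - φ i| ≤ c := by
    intro i j
    induction hconn i j with
    | refl => exact ⟨0, fun φ _ => by simp⟩
    | tail hR hab ih =>
      obtain ⟨c, hc⟩ := ih
      rename_i b d
      refine ⟨c + (2 / ω b d) ^ (1/p), fun φ hφ => ?_⟩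
      have h1 := hc φ hφ
      have h2 := hedge φ hφ b d hab
      calc |φ d - φ i| ≤ |φ d - φ b| + |φ b - φ i| := abs_sub_le _ _ _
        _ ≤ (2 / ω b d) ^ (1/p) + c := add_le_add h2 h1
        _ = c + (2 / ω b d) ^ (1/p) := by ring
  choose c hc using key
  set C₀ : ℝ := Finset.sup' Finset.univ Finset.univ_nonempty
    (fun i => Finset.sup' Finset.univ Finset.univ_nonempty (c i)) with hC₀
  have hcC : ∀ i j, c i j ≤ C₀ := fun i j =>
    le_trans (Finset.le_sup' (c i) (Finset.mem_univ j))
      (Finset.le_sup' (fun i => Finset.sup' Finset.univ Finset.univ_nonempty (c i))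
        (Finset.mem_univ i))
  refine ⟨C₀, (∑ i, μ i) * Real.exp (|β| * C₀ ^ α), fun φ hφ hmean => ?_⟩
  have hbound : ∀ i j : V, |φ j - φ i| ≤ C₀ := fun i j => le_trans (hc i j φ hφ) (hcC i j)
  have hnegv : ∃ j, φ j ≤ 0 := by
    by_contra h
    push_neg at h
    have := Finset.sum_pos (fun i _ => mul_pos (hμ i) (h i)) Finset.univ_nonempty
    linarith
  have hposv : ∃ j, 0 ≤ φ j := by
    by_contra h
    push_neg at h
    have := Finset.sum_neg (fun i _ => mul_neg_of_pos_of_neg (hμ i) (h i)) Finset.univ_nonempty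
    linarith
  obtain ⟨jm, hjm⟩ := hnegv
  obtain ⟨jp, hjp⟩ := hposv
  have habs : ∀ i, |φ i| ≤ C₀ := by
    intro i
    rw [abs_le]
    constructor
    · have := (abs_le.mp (hbound i jp)).2
      linarith
    · have := (abs_le.mp (hbound jm i)).2
      linarith
  refine ⟨habs, ?_⟩
  have hC₀nn : 0 ≤ C₀ := le_trans (abs_nonneg _) (habs (Classical.arbitrary V))
  have hterm : ∀ i : V, μ i * Real.exp (β * |φ i| ^ α) ≤ μ i * Real.exp (|β| * C₀ ^ α) := by
    intro i
    refine mul_le_mul_of_nonneg_left (Real.exp_le_exp.mpr ?_) (hμ i).le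
    calc β * |φ i| ^ α ≤ |β * |φ i| ^ α| := le_abs_self _
      _ = |β| * |φ i| ^ α := by
          rw [abs_mul, abs_of_nonneg (Real.rpow_nonneg (abs_nonneg _) α)]
      _ ≤ |β| * C₀ ^ α :=
          mul_le_mul_of_nonneg_left
            (Real.rpow_le_rpow (abs_nonneg _) (habs i) hα) (abs_nonneg β)
  calc ∑ i, μ i * Real.exp (β * |φ i| ^ α) ≤ ∑ i, μ i * Real.exp (|β| * C₀ ^ α) :=
        Finset.sum_le_sum (fun i _ => hterm i)
    _ = (∑ i, μ i) * Real.exp (|β| * C₀ ^ α) := by rw [← Finset.sum_mul]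
end

section
/- The operator L = Δ_p - k is injective: if (Δ_p - k) f = (Δ_p - k) g on V, then f = g. -/
open Finset Real

lemma phi_nonneg_eq (p : ℝ) (hp : 1 < p) {t : ℝ} (ht : 0 ≤ t) :
    |t| ^ (p - 2) * t = t ^ (p - 1) := by
  rcases eq_or_lt_of_le ht with h | h
  · simp [← h, Real.zero_rpow (by intro hc; linarith : p - 1 ≠ 0)]
  · rw [abs_of_pos h, show p - 1 = (p - 2) + 1 by ring, Real.rpow_add h, Real.rpow_one]

lemma phi_mono (p : ℝ) (hp : 1 < p) : Monotone (fun t : ℝ => |t| ^ (p - 2) * t) := by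
  have hodd : ∀ t : ℝ, |(-t)| ^ (p - 2) * (-t) = -(|t| ^ (p - 2) * t) := by
    intro t; rw [abs_neg]; ring
  intro a b hab
  simp only
  rcases le_or_gt 0 a with ha | ha
  · rw [phi_nonneg_eq p hp ha, phi_nonneg_eq p hp (ha.trans hab)]
    exact Real.rpow_le_rpow ha hab (by linarith)
  · rcases le_or_gt 0 b with hb | hb
    · have h1 : |a| ^ (p - 2) * a ≤ 0 :=
        mul_nonpos_of_nonneg_of_nonpos (Real.rpow_nonneg (abs_nonneg a) _) ha.le
      have h2 : 0 ≤ |b| ^ (p - 2) * b :=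
        mul_nonneg (Real.rpow_nonneg (abs_nonneg b) _) hb
      linarith
    · have h1 : |(-b)| ^ (p - 2) * (-b) ≤ |(-a)| ^ (p - 2) * (-a) := by
        rw [phi_nonneg_eq p hp (by linarith : (0:ℝ) ≤ -b),
            phi_nonneg_eq p hp (by linarith : (0:ℝ) ≤ -a)]
        exact Real.rpow_le_rpow (by linarith) (by linarith) (by linarith)
      rw [hodd, hodd] at h1; linarith

lemma phi_key (p : ℝ) (hp : 1 < p) (a b : ℝ) :
    0 ≤ (|a| ^ (p - 2) * a - |b| ^ (p - 2) * b) * (a - b) := by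
  rcases le_total a b with h | h
  · have h2 := phi_mono p hp h
    simp only at h2
    nlinarith
  · have h2 := phi_mono p hp h
    simp only at h2
    nlinarith

/-- `L = Δ_p - k` is injective when `k > 0`. -/
theorem stmt7 {V : Type*} [Fintype V] [Nonempty V] (p : ℝ) (hp : 1 < p)
    (A : V → V → Prop) [DecidableRel A] (hA : Symmetric A)
    (ω : V → V → ℝ) (hωsymm : ∀ i j, ω i j = ω j i) (hωpos : ∀ i j, A i j → 0 < ω i j)
    (μ : V → ℝ) (hμ : ∀ i, 0 < μ i)
    (hconn : ∀ i j : V, Relation.ReflTransGen A i j) (k : V → ℝ) (hk : ∀ i, 0 < k i) (f g : V → ℝ)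
    (hfg : ∀ i, pLap p A ω μ f i - k i * f i = pLap p A ω μ g i - k i * g i) :
    f = g := by
  set φ : ℝ → ℝ := fun t => |t| ^ (p - 2) * t with hφ
  set d : V → ℝ := fun i => f i - g i with hd
  set D : V → V → ℝ := fun i j => ω i j * (φ (f j - f i) - φ (g j - g i)) with hD
  -- pointwise: inner-sum difference equals μ i * k i * d i
  have key : ∀ i, (∑ j, if A i j then D i j else 0) = μ i * (k i * d i) := by
    intro i
    have h := hfg i
    unfold pLap at h
    have hμi : μ i ≠ 0 := (hμ i).ne'
    have h2 : (1 / μ i) * (∑ j, if A i j then D i j else 0) = k i * d i := by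
      have hsplit : (∑ j, if A i j then D i j else 0)
          = (∑ j, if A i j then ω i j * |f j - f i| ^ (p - 2) * (f j - f i) else 0)
            - (∑ j, if A i j then ω i j * |g j - g i| ^ (p - 2) * (g j - g i) else 0) := by
        rw [← Finset.sum_sub_distrib]
        refine Finset.sum_congr rfl fun j _ => ?_
        split_ifs <;> simp [hD, hφ] <;> ring
      rw [hsplit, mul_sub]
      simp only [hd]
      linarith [h]
    field_simp at h2
    rw [h2]; ring
  -- S1 : the Dirichlet-type sum
  have hS1 : ∑ i, ∑ j, (if A i j then D i j * d i else 0)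
      = ∑ i, μ i * (k i * d i) * d i := by
    refine Finset.sum_congr rfl fun i _ => ?_
    rw [← key i, Finset.sum_mul]
    refine Finset.sum_congr rfl fun j _ => ?_
    split_ifs <;> simp
  -- antisymmetry: D j i = - D i j
  have hDanti : ∀ i j, D j i = - D i j := by
    intro i j
    simp only [hD, hφ]
    rw [hωsymm j i, abs_sub_comm (f i) (f j), abs_sub_comm (g i) (g j)]
    ring
  -- second copy via swap
  have hswap : ∑ i, ∑ j, (if A i j then D i j * d i else 0)
      = ∑ i, ∑ j, (if A i j then - (D i j * d j) else 0) := by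
    rw [Finset.sum_comm]
    refine Finset.sum_congr rfl fun i _ => Finset.sum_congr rfl fun j _ => ?_
    rw [if_congr (Iff.intro (fun h => hA h) (fun h => hA h)) rfl rfl, hDanti i j]
    split_ifs <;> ring_nf
  have hdouble : (2:ℝ) * (∑ i, ∑ j, (if A i j then D i j * d i else 0))
      = ∑ i, ∑ j, (if A i j then D i j * (d i - d j) else 0) := by
    rw [two_mul]
    nth_rewrite 2 [hswap]
    rw [← Finset.sum_add_distrib]
    refine Finset.sum_congr rfl fun i _ => ?_
    rw [← Finset.sum_add_distrib]
    refine Finset.sum_congr rfl fun j _ => ?_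
    split_ifs <;> ring
  -- each term of the doubled sum is ≤ 0
  have hterm : ∀ i j, (if A i j then D i j * (d i - d j) else 0) ≤ 0 := by
    intro i j
    split_ifs with h
    · have := phi_key p hp (f j - f i) (g j - g i)
      have hω := hωpos i j h
      have : D i j * (d i - d j)
          = - (ω i j * ((φ (f j - f i) - φ (g j - g i)) * ((f j - f i) - (g j - g i)))) := by
        simp only [hD, hd]; ring
      rw [this]
      have : 0 ≤ ω i j * ((φ (f j - f i) - φ (g j - g i)) * ((f j - f i) - (g j - g i))) :=
        mul_nonneg hω.le (phi_key p hp _ _)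
      linarith
    · exact le_rfl
  have hle : ∑ i, ∑ j, (if A i j then D i j * d i else 0) ≤ 0 := by
    nlinarith [hdouble, Finset.sum_nonpos (fun i (_ : i ∈ Finset.univ) =>
      Finset.sum_nonpos (fun j (_ : j ∈ Finset.univ) => hterm i j))]
  rw [hS1] at hle
  have hnn : ∀ i ∈ Finset.univ, (0:ℝ) ≤ μ i * (k i * d i) * d i := by
    intro i _
    have : μ i * (k i * d i) * d i = (μ i * k i) * (d i * d i) := by ring
    rw [this]
    exact mul_nonneg (mul_nonneg (hμ i).le (hk i).le) (mul_self_nonneg _)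
  have hzero : ∑ i, μ i * (k i * d i) * d i = 0 :=
    le_antisymm hle (Finset.sum_nonneg hnn)
  have : ∀ i ∈ Finset.univ, μ i * (k i * d i) * d i = 0 :=
    (Finset.sum_eq_zero_iff_of_nonneg hnn).mp hzero
  funext i
  have hi := this i (Finset.mem_univ i)
  have h1 : (μ i * k i) * (d i * d i) = 0 := by rw [← hi]; ring
  have hdi : d i = 0 := by
    have hpos := mul_pos (hμ i) (hk i)
    exact mul_self_eq_zero.mp ((mul_eq_zero.mp h1).resolve_left hpos.ne')
  simpa [hd, sub_eq_zero] using hdi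
end

section
/- The operator L = Δ_p - k is surjective: for any f : V → ℝ there exists u : V → ℝ with Δ_p u - k u = f. -/
open Finset Real

noncomputable def psi (p x : ℝ) : ℝ := |x| ^ (p - 2) * x

lemma psi_neg (p x : ℝ) : psi p (-x) = - psi p x := by
  simp [psi]

lemma hasDerivAt_abs_rpow' {p : ℝ} (hp : 1 < p) (x : ℝ) :
    HasDerivAt (fun y : ℝ => |y| ^ p) (p * psi p x) x := by
  simpa [psi, mul_assoc] using hasDerivAt_abs_rpow x hp

lemma continuous_abs_rpow {p : ℝ} (hp : 1 < p) : Continuous fun x : ℝ => |x| ^ p :=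
  continuous_iff_continuousAt.2 fun x => (hasDerivAt_abs_rpow' hp x).continuousAt

lemma quad_nonneg {P c x : ℝ} (hP : 0 < P) : 0 ≤ P * x ^ 2 - c * x + c ^ 2 / (4 * P) := by
  have h : P * x ^ 2 - c * x + c ^ 2 / (4 * P) = (2 * P * x - c) ^ 2 / (4 * P) := by
    field_simp
    ring
  rw [h]
  positivity

lemma hasDerivAt_abs_rpow_affine {p : ℝ} (hp : 1 < p) (w c : ℝ) :
    HasDerivAt (fun t : ℝ => |w + t * c| ^ p) (p * psi p w * c) 0 := by
  have h1 : HasDerivAt (fun t : ℝ => w + t * c) c 0 := by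
    simpa using ((hasDerivAt_id (0:ℝ)).mul_const c).const_add w
  have h2 := (hasDerivAt_abs_rpow' hp (w + 0 * c)).comp 0 h1
  simpa [Function.comp_def] using h2

set_option maxHeartbeats 2000000 in
/-- `L = Δ_p - k` is surjective when `k > 0`. -/
theorem stmt8 {V : Type*} [Fintype V] [Nonempty V] (p : ℝ) (hp : 1 < p)
    (A : V → V → Prop) [DecidableRel A] (hA : Symmetric A)
    (ω : V → V → ℝ) (hωsymm : ∀ i j, ω i j = ω j i) (hωpos : ∀ i j, A i j → 0 < ω i j)
    (μ : V → ℝ) (hμ : ∀ i, 0 < μ i)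
    (hconn : ∀ i j : V, Relation.ReflTransGen A i j) (k : V → ℝ) (hk : ∀ i, 0 < k i) (f : V → ℝ) :
    ∃ u : V → ℝ, ∀ i, pLap p A ω μ u i - k i * u i = f i := by
  classical
  have hp0 : (0:ℝ) < p := by linarith
  set F : (V → ℝ) → ℝ := fun u =>
    (∑ a, ∑ b, if A a b then ω a b * |u b - u a| ^ p else 0)
      + ∑ a, μ a * (p * k a * (u a) ^ 2 + 2 * p * f a * u a) with hF
  -- continuity of F
  have hFc : Continuous F := by
    rw [hF]
    apply Continuous.add
    · apply continuous_finset_sum; intro a _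
      apply continuous_finset_sum; intro b _
      by_cases h : A a b
      · simp only [if_pos h]
        exact continuous_const.mul
          ((continuous_abs_rpow hp).comp ((continuous_apply b).sub (continuous_apply a)))
      · simp only [if_neg h]; exact continuous_const
    · apply continuous_finset_sum; intro a _
      fun_prop
  -- the minimum of μ k
  obtain ⟨a₀, -, ha₀⟩ := Finset.exists_min_image Finset.univ (fun a => μ a * k a)
    Finset.univ_nonempty
  set m : ℝ := μ a₀ * k a₀ with hm'
  have hm : 0 < m := mul_pos (hμ a₀) (hk a₀)
  have hmle : ∀ a, m ≤ μ a * k a := fun a => ha₀ a (Finset.mem_univ a)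
  set c : V → ℝ := fun b => 2 * p * μ b * |f b| with hc
  have hc0 : ∀ b, 0 ≤ c b := fun b =>
    mul_nonneg (mul_nonneg (by linarith) (hμ b).le) (abs_nonneg _)
  set B : ℝ := ∑ b, (c b) ^ 2 / (4 * (p * m)) with hB
  set C : ℝ := ∑ b, c b with hC
  have hpm : 0 < p * m := mul_pos hp0 hm
  have hBt : ∀ b : V, 0 ≤ (c b) ^ 2 / (4 * (p * m)) := fun b =>
    div_nonneg (sq_nonneg _) (by nlinarith)
  have hB0 : 0 ≤ B := Finset.sum_nonneg fun b _ => hBt b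
  have hCa : ∀ a, c a ≤ C := fun a =>
    Finset.single_le_sum (f := c) (fun b _ => hc0 b) (Finset.mem_univ a)
  -- coercivity lower bound
  have hlow : ∀ (v : V → ℝ) (a : V), p * m * (v a) ^ 2 - C * |v a| - B ≤ F v := by
    intro v a
    have hE : 0 ≤ ∑ a, ∑ b, if A a b then ω a b * |v b - v a| ^ p else 0 :=
      Finset.sum_nonneg fun x _ => Finset.sum_nonneg fun y _ => by
        by_cases h : A x y
        · simp only [if_pos h]
          exact mul_nonneg (hωpos x y h).le (Real.rpow_nonneg (abs_nonneg _) _)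
        · simp [h]
    have hterm : ∀ b, p * m * (v b) ^ 2 - c b * |v b|
        ≤ μ b * (p * k b * (v b) ^ 2 + 2 * p * f b * v b) := by
      intro b
      have hA1 : p * m * (v b) ^ 2 ≤ p * (μ b * k b) * (v b) ^ 2 := by
        nlinarith [mul_nonneg (sub_nonneg.2 (hmle b)) (sq_nonneg (v b)), hp0]
      have hA2 : -(|f b| * |v b|) ≤ f b * v b := by
        rw [← abs_mul]; exact neg_abs_le _
      have hA3 := mul_le_mul_of_nonneg_left hA2
        (mul_nonneg (by linarith : (0:ℝ) ≤ 2 * p) (hμ b).le)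
      have hcb : c b = 2 * p * μ b * |f b| := rfl
      rw [hcb]
      nlinarith [hA1, hA3]
    have hq : ∀ b, 0 ≤ (p * m * (v b) ^ 2 - c b * |v b|) + (c b) ^ 2 / (4 * (p * m)) := by
      intro b
      have h1 := quad_nonneg (c := c b) (x := |v b|) hpm
      rw [sq_abs] at h1
      linarith
    have hsingle := Finset.single_le_sum
      (f := fun b => (p * m * (v b) ^ 2 - c b * |v b|) + (c b) ^ 2 / (4 * (p * m)))
      (fun b _ => hq b) (Finset.mem_univ a)
    have hsum : ∑ b, ((p * m * (v b) ^ 2 - c b * |v b|) + (c b) ^ 2 / (4 * (p * m)))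
        = (∑ b, (p * m * (v b) ^ 2 - c b * |v b|)) + B := by
      rw [hB, Finset.sum_add_distrib]
    have hsum2 : (∑ b, (p * m * (v b) ^ 2 - c b * |v b|))
        ≤ ∑ b, μ b * (p * k b * (v b) ^ 2 + 2 * p * f b * v b) :=
      Finset.sum_le_sum fun b _ => hterm b
    have hca : c a * |v a| ≤ C * |v a| :=
      mul_le_mul_of_nonneg_right (hCa a) (abs_nonneg _)
    have hBa := hBt a
    rw [hF]
    simp only
    rw [hsum] at hsingle
    nlinarith [hE, hsum2, hsingle, hca, hBa]
  -- minimization over a compact box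
  set R : ℝ := max 1 ((C + B + 1) / (p * m)) with hR
  have hR1 : (1:ℝ) ≤ R := le_max_left _ _
  have hR2 : (C + B + 1) / (p * m) ≤ R := le_max_right _ _
  set K : Set (V → ℝ) := Set.univ.pi fun _ => Set.Icc (-R) R with hK
  have hKc : IsCompact K := isCompact_univ_pi fun _ => isCompact_Icc
  have hK0 : (fun _ : V => (0:ℝ)) ∈ K := by
    rw [hK, Set.mem_univ_pi]
    intro a
    simp only [Set.mem_Icc]
    constructor <;> linarith
  obtain ⟨u, huK, hminK⟩ := hKc.exists_isMinOn ⟨_, hK0⟩ hFc.continuousOn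
  have hF0 : F (fun _ => 0) = 0 := by
    rw [hF]
    simp [Real.zero_rpow (ne_of_gt hp0)]
  have hglobal : ∀ v, F u ≤ F v := by
    intro v
    by_cases hv : v ∈ K
    · exact hminK hv
    · have hFu0 : F u ≤ 0 := hF0 ▸ hminK hK0
      rw [hK, Set.mem_univ_pi] at hv
      push_neg at hv
      obtain ⟨a, ha⟩ := hv
      have hva : R < |v a| := lt_of_not_ge fun hle => ha (Set.mem_Icc.mpr (abs_le.mp hle))
      have h1 : C + B + 1 < p * m * |v a| := by
        rw [div_le_iff₀ hpm] at hR2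
        nlinarith [hva, hpm]
      have h2 : |v a| ^ 2 = (v a) ^ 2 := sq_abs (v a)
      have h3 := hlow v a
      have h4 : (1:ℝ) < |v a| := lt_of_le_of_lt hR1 hva
      nlinarith [h1, h2, h3, h4, hFu0]
  refine ⟨u, fun i => ?_⟩
  -- Euler–Lagrange equation at the minimizer
  set d : V → ℝ := fun a => if a = i then (1:ℝ) else 0 with hd
  set g : ℝ → ℝ := fun t => F (fun a => u a + t * d a) with hg
  have hloc : IsLocalMin g 0 := by
    apply Filter.Eventually.of_forall
    intro t
    have h0 : (fun a : V => u a + (0:ℝ) * d a) = u := by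
      funext a
      simp
    simp only [hg, h0]
    exact hglobal _
  have hDer : HasDerivAt g
      ((∑ a, ∑ b, if A a b then ω a b * (p * psi p (u b - u a) * (d b - d a)) else 0)
        + ∑ a, μ a * (p * k a * (2 * u a * d a) + 2 * p * f a * d a)) 0 := by
    rw [hg, hF]
    simp only
    apply HasDerivAt.add
    · apply HasDerivAt.fun_sum; intro a _
      apply HasDerivAt.fun_sum; intro b _
      by_cases h : A a b
      · simp only [if_pos h]
        have key : (fun t : ℝ => ω a b * |(u b + t * d b) - (u a + t * d a)| ^ p)
            = fun t : ℝ => ω a b * |(u b - u a) + t * (d b - d a)| ^ p := by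
          funext t
          rw [show (u b + t * d b) - (u a + t * d a) = (u b - u a) + t * (d b - d a) by ring]
        rw [key]
        have := (hasDerivAt_abs_rpow_affine hp (u b - u a) (d b - d a)).const_mul (ω a b)
        simpa [mul_assoc] using this
      · simp only [if_neg h]; exact hasDerivAt_const 0 0
    · apply HasDerivAt.fun_sum; intro a _
      have L : HasDerivAt (fun t : ℝ => u a + t * d a) (d a) 0 := by
        simpa using ((hasDerivAt_id (0:ℝ)).mul_const (d a)).const_add (u a)
      have h1 := (((L.pow 2).const_mul (p * k a)).add (L.const_mul (2 * p * f a))).const_mul (μ a)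
      have hval : μ a * (p * k a * (↑(2:ℕ) * (u a + 0 * d a) ^ (2 - 1) * d a) + 2 * p * f a * d a)
          = μ a * (p * k a * (2 * u a * d a) + 2 * p * f a * d a) := by
        push_cast
        ring
      rw [← hval]
      exact h1
  have hD0 := hloc.hasDerivAt_eq_zero hDer
  set S : ℝ := ∑ j, if A i j then ω i j * psi p (u j - u i) else 0 with hS
  have hedge : (∑ a, ∑ b, if A a b then ω a b * (p * psi p (u b - u a) * (d b - d a)) else 0)
      = -2 * p * S := by
    have hterm : ∀ a b : V, (if A a b then ω a b * (p * psi p (u b - u a) * (d b - d a)) else 0)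
        = (if b = i then (if A a b then ω a b * (p * psi p (u b - u a)) else 0) else 0)
          - (if a = i then (if A a b then ω a b * (p * psi p (u b - u a)) else 0) else 0) := by
      intro a b
      by_cases h : A a b
      · simp only [if_pos h]
        by_cases hb : b = i <;> by_cases ha : a = i <;> simp [hb, ha, hd] <;> ring
      · simp [h]
    simp_rw [hterm, Finset.sum_sub_distrib]
    have h1 : ∀ a : V, (∑ b, if b = i then (if A a b then ω a b * (p * psi p (u b - u a)) else 0)
        else 0) = (if A a i then ω a i * (p * psi p (u i - u a)) else 0) := by
      intro a
      rw [Finset.sum_ite_eq' Finset.univ i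
        (fun b => if A a b then ω a b * (p * psi p (u b - u a)) else 0)]
      simp
    have h2 : (∑ a, ∑ b, if a = i then (if A a b then ω a b * (p * psi p (u b - u a)) else 0)
        else 0) = ∑ b, (if A i b then ω i b * (p * psi p (u b - u i)) else 0) := by
      rw [Finset.sum_comm]
      apply Finset.sum_congr rfl
      intro b _
      rw [Finset.sum_ite_eq' Finset.univ i
        (fun a => if A a b then ω a b * (p * psi p (u b - u a)) else 0)]
      simp
    simp_rw [h1]
    rw [h2]
    have h3 : ∀ a : V, (if A a i then ω a i * (p * psi p (u i - u a)) else 0)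
        = -(p * (if A i a then ω i a * psi p (u a - u i) else 0)) := by
      intro a
      by_cases h : A a i
      · rw [if_pos h, if_pos (hA h), hωsymm]
        rw [show u i - u a = -(u a - u i) by ring, psi_neg]
        ring
      · rw [if_neg h, if_neg (fun h' => h (hA h'))]
        ring
    have h4 : ∀ b : V, (if A i b then ω i b * (p * psi p (u b - u i)) else 0)
        = p * (if A i b then ω i b * psi p (u b - u i) else 0) := by
      intro b
      by_cases h : A i b <;> simp [h] <;> ring
    simp_rw [h3, h4]
    rw [Finset.sum_neg_distrib, ← Finset.mul_sum, ← hS]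
    ring
  have hpot : (∑ a, μ a * (p * k a * (2 * u a * d a) + 2 * p * f a * d a))
      = μ i * (2 * p * k i * u i + 2 * p * f i) := by
    have hterm : ∀ a : V, μ a * (p * k a * (2 * u a * d a) + 2 * p * f a * d a)
        = if a = i then μ a * (2 * p * k a * u a + 2 * p * f a) else 0 := by
      intro a
      by_cases ha : a = i <;> simp [ha, hd, -mul_eq_mul_left_iff] <;> ring
    simp_rw [hterm]
    rw [Finset.sum_ite_eq' Finset.univ i (fun a => μ a * (2 * p * k a * u a + 2 * p * f a))]
    simp
  rw [hedge, hpot] at hD0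
  have hSeq : S = μ i * (k i * u i + f i) := by
    have h2p : (2 * p : ℝ) ≠ 0 := by positivity
    have heq : 2 * p * (μ i * (k i * u i + f i) - S) = 0 := by linear_combination hD0
    have := (mul_eq_zero.mp heq).resolve_left h2p
    linarith
  show pLap p A ω μ u i - k i * u i = f i
  unfold pLap
  have hsum : (∑ j, if A i j then ω i j * |u j - u i| ^ (p - 2) * (u j - u i) else 0) = S := by
    rw [hS]
    apply Finset.sum_congr rfl
    intro j _
    by_cases h : A i j <;> simp [h, psi, mul_assoc]
  rw [hsum, hSeq]
  have hμi : μ i ≠ 0 := ne_of_gt (hμ i)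
  field_simp
  ring
end

section
/- If u : V → ℝ solves Δ_p u = -h e^u on V with h : V → ℝ not identically zero, then h changes sign (takes both positive and negative values) and Σ_i μ_i h_i < 0. -/
open Finset Real

/-- necessary conditions for solvability of `Δ_p u = -h e^u` with `h ≢ 0`. -/
theorem stmt12 {V : Type*} [Fintype V] [Nonempty V] (p : ℝ) (hp : 1 < p)
    (A : V → V → Prop) [DecidableRel A] (hA : Symmetric A)
    (ω : V → V → ℝ) (hωsymm : ∀ i j, ω i j = ω j i) (hωpos : ∀ i j, A i j → 0 < ω i j)
    (μ : V → ℝ) (hμ : ∀ i, 0 < μ i)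
    (hconn : ∀ i j : V, Relation.ReflTransGen A i j) (h : V → ℝ) (hne : ∃ i, h i ≠ 0) (u : V → ℝ)
    (hu : ∀ i, pLap p A ω μ u i = - h i * Real.exp (u i)) :
    (∃ i, 0 < h i) ∧ (∃ i, h i < 0) ∧ ∑ i, μ i * h i < 0 := by
  classical
  set E : V → V → ℝ := fun i j => ω i j * |u j - u i| ^ (p - 2) * (u j - u i) with hE
  have hEanti : ∀ i j, E j i = - E i j := by
    intro i j
    simp only [hE]
    rw [hωsymm j i, abs_sub_comm]
    ring
  have hrow : ∀ i, ∑ j, (if A i j then E i j else 0) = - (μ i * (h i * Real.exp (u i))) := by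
    intro i
    have h1 := hu i
    simp only [pLap, hE] at h1 ⊢
    have hμi : μ i ≠ 0 := (hμ i).ne'
    field_simp at h1
    have h2 : (∑ x, if A i x then ω i x * |u x - u i| ^ (p - 2) * (u x - u i) else 0)
        = ∑ x, if A i x then ω i x * (u x - u i) * |u x - u i| ^ (p - 2) else 0 :=
      Finset.sum_congr rfl fun x _ => by split_ifs <;> ring
    linarith [h1, h2]
  have hswap : ∀ (g : V → V → ℝ), ∑ i, ∑ j, (if A i j then g i j else 0)
      = ∑ i, ∑ j, (if A i j then g j i else 0) := by
    intro g
    rw [Finset.sum_comm]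
    refine Finset.sum_congr rfl fun i _ => Finset.sum_congr rfl fun j _ => ?_
    have hiff : A j i ↔ A i j := ⟨fun hh => hA hh, fun hh => hA hh⟩
    simp [hiff]
  -- total sum of E is zero
  have hEzero : ∑ i, ∑ j, (if A i j then E i j else 0) = 0 := by
    have h0 : ∑ i, ∑ j, (if A i j then E i j else 0)
        = - ∑ i, ∑ j, (if A i j then E i j else 0) := by
      conv_lhs => rw [hswap E]
      rw [← Finset.sum_neg_distrib]
      refine Finset.sum_congr rfl fun i _ => ?_
      rw [← Finset.sum_neg_distrib]
      refine Finset.sum_congr rfl fun j _ => ?_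
      by_cases hij : A i j
      · rw [if_pos hij, if_pos hij, hEanti]
      · simp [hij]
    linarith
  have htot : ∑ i, μ i * (h i * Real.exp (u i)) = 0 := by
    have : ∑ i, ∑ j, (if A i j then E i j else 0)
        = ∑ i, - (μ i * (h i * Real.exp (u i))) :=
      Finset.sum_congr rfl fun i _ => hrow i
    rw [hEzero, Finset.sum_neg_distrib] at this
    linarith
  -- existence of a positive value of h
  have hpos : ∃ i, 0 < h i := by
    by_contra hc
    push_neg at hc
    have hall : ∀ i ∈ Finset.univ, μ i * (h i * Real.exp (u i)) ≤ 0 := fun i _ =>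
      mul_nonpos_of_nonneg_of_nonpos (hμ i).le
        (mul_nonpos_of_nonpos_of_nonneg (hc i) (Real.exp_pos _).le)
    obtain ⟨i0, hi0⟩ := hne
    have hi0' : h i0 < 0 := lt_of_le_of_ne (hc i0) hi0
    have hstrict : μ i0 * (h i0 * Real.exp (u i0)) < 0 :=
      mul_neg_of_pos_of_neg (hμ i0) (mul_neg_of_neg_of_pos hi0' (Real.exp_pos _))
    have hlt : ∑ i, μ i * (h i * Real.exp (u i)) < 0 := by
      have := Finset.sum_lt_sum (f := fun i => μ i * (h i * Real.exp (u i)))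
        (g := fun _ => (0:ℝ)) hall ⟨i0, Finset.mem_univ i0, hstrict⟩
      simpa using this
    linarith [htot]
  -- the key test function computation
  set f : V → ℝ := fun i => Real.exp (-u i) with hf
  set T : ℝ := ∑ i, ∑ j, (if A i j then E i j * f i else 0) with hT
  have hTval : T = - ∑ i, μ i * h i := by
    rw [hT]
    rw [← Finset.sum_neg_distrib]
    refine Finset.sum_congr rfl fun i _ => ?_
    have : ∑ j, (if A i j then E i j * f i else 0)
        = (∑ j, (if A i j then E i j else 0)) * f i := by
      rw [Finset.sum_mul]
      exact Finset.sum_congr rfl fun j _ => by by_cases hij : A i j <;> simp [hij]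
    rw [this, hrow i, hf]
    have key : Real.exp (u i) * Real.exp (-u i) = 1 := by
      rw [← Real.exp_add]; simp
    show -(μ i * (h i * Real.exp (u i))) * Real.exp (-u i) = -(μ i * h i)
    calc -(μ i * (h i * Real.exp (u i))) * Real.exp (-u i)
        = -(μ i * h i) * (Real.exp (u i) * Real.exp (-u i)) := by ring
      _ = -(μ i * h i) := by rw [key]; ring
  -- edge terms are nonnegative
  have hterm : ∀ i j, A i j → 0 ≤ E i j * (f i - f j) := by
    intro i j hij
    rcases lt_trichotomy (u i) (u j) with hlt | heq | hgt
    · have h1 : 0 < u j - u i := by linarith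
      have h2 : 0 < f i - f j := by
        have := Real.exp_lt_exp.2 (neg_lt_neg hlt)
        simp only [hf]; linarith
      have h3 : 0 < |u j - u i| ^ (p - 2) :=
        Real.rpow_pos_of_pos (abs_pos.2 (by linarith)) _
      have := hωpos i j hij
      positivity
    · simp [hE, heq]
    · have h1 : u j - u i < 0 := by linarith
      have h2 : f i - f j < 0 := by
        have := Real.exp_lt_exp.2 (neg_lt_neg hgt)
        simp only [hf]; linarith
      have h3 : 0 < |u j - u i| ^ (p - 2) :=
        Real.rpow_pos_of_pos (abs_pos.2 (by linarith)) _
      have h4 := hωpos i j hij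
      have h5 : E i j < 0 := by
        simp only [hE]
        exact mul_neg_of_pos_of_neg (by positivity) h1
      nlinarith
  have h2T : 2 * T = ∑ i, ∑ j, (if A i j then E i j * (f i - f j) else 0) := by
    have hT2 : T = ∑ i, ∑ j, (if A i j then - (E i j * f j) else 0) := by
      rw [hT, hswap (fun i j => E i j * f i)]
      refine Finset.sum_congr rfl fun i _ => Finset.sum_congr rfl fun j _ => ?_
      by_cases hij : A i j
      · rw [if_pos hij, if_pos hij, hEanti]; ring
      · simp [hij]
    calc 2 * T = (∑ i, ∑ j, (if A i j then E i j * f i else 0))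
          + ∑ i, ∑ j, (if A i j then - (E i j * f j) else 0) := by
          rw [← hT, ← hT2]; ring
      _ = ∑ i, ∑ j, (if A i j then E i j * (f i - f j) else 0) := by
          rw [← Finset.sum_add_distrib]
          refine Finset.sum_congr rfl fun i _ => ?_
          rw [← Finset.sum_add_distrib]
          refine Finset.sum_congr rfl fun j _ => ?_
          by_cases hij : A i j
          · rw [if_pos hij, if_pos hij, if_pos hij]; ring
          · simp [hij]
  have hTnonneg : 0 ≤ T := by
    have : 0 ≤ 2 * T := by
      rw [h2T]
      refine Finset.sum_nonneg fun i _ => Finset.sum_nonneg fun j _ => ?_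
      by_cases hij : A i j
      · simp only [hij, if_true]; exact hterm i j hij
      · simp [hij]
    linarith
  have hle : ∑ i, μ i * h i ≤ 0 := by linarith [hTnonneg, hTval]
  -- strictness
  have hstrict : ∑ i, μ i * h i ≠ 0 := by
    intro hzero
    have hT0 : T = 0 := by rw [hTval, hzero]; ring
    have h2T0 : ∑ i, ∑ j, (if A i j then E i j * (f i - f j) else 0) = 0 := by
      rw [← h2T, hT0]; ring
    have hallzero : ∀ i j, A i j → E i j * (f i - f j) = 0 := by
      intro i j hij
      have houter := (Finset.sum_eq_zero_iff_of_nonneg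
        (fun i _ => Finset.sum_nonneg fun j _ => by
          by_cases hij' : A i j
          · simp only [hij', if_true]; exact hterm i j hij'
          · simp [hij'])).1 h2T0 i (Finset.mem_univ i)
      have hinner := (Finset.sum_eq_zero_iff_of_nonneg
        (fun j _ => by
          by_cases hij' : A i j
          · simp only [hij', if_true]; exact hterm i j hij'
          · simp [hij'])).1 houter j (Finset.mem_univ j)
      simpa [hij] using hinner
    have hedge : ∀ i j, A i j → u i = u j := by
      intro i j hij
      by_contra hne'
      rcases lt_or_gt_of_ne hne' with hlt | hgt
      · have h1 : 0 < u j - u i := by linarith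
        have h2 : 0 < f i - f j := by
          have := Real.exp_lt_exp.2 (neg_lt_neg hlt)
          simp only [hf]; linarith
        have h3 : 0 < |u j - u i| ^ (p - 2) :=
          Real.rpow_pos_of_pos (abs_pos.2 (by linarith)) _
        have h4 := hωpos i j hij
        have : 0 < E i j * (f i - f j) := by
          simp only [hE]; positivity
        exact this.ne' (hallzero i j hij)
      · have h1 : u j - u i < 0 := by linarith
        have h2 : f i - f j < 0 := by
          have := Real.exp_lt_exp.2 (neg_lt_neg hgt)
          simp only [hf]; linarith
        have h3 : 0 < |u j - u i| ^ (p - 2) :=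
          Real.rpow_pos_of_pos (abs_pos.2 (by linarith)) _
        have h4 := hωpos i j hij
        have h5 : E i j < 0 := by
          simp only [hE]
          exact mul_neg_of_pos_of_neg (by positivity) h1
        have : 0 < E i j * (f i - f j) := mul_pos_of_neg_of_neg h5 h2
        exact this.ne' (hallzero i j hij)
    have hconst : ∀ i j : V, u i = u j := by
      intro i j
      induction hconn i j with
      | refl => rfl
      | tail _ hstep ih => exact ih.trans (hedge _ _ hstep)
    have hE0 : ∀ i j, E i j = 0 := by
      intro i j
      simp [hE, hconst i j]
    have hh0 : ∀ i, h i = 0 := by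
      intro i
      have hri : (0:ℝ) = -(μ i * (h i * Real.exp (u i))) := by
        rw [← hrow i]
        refine (Finset.sum_eq_zero fun j _ => ?_).symm
        rw [hE0]
        simp
      have h0 : μ i * (h i * Real.exp (u i)) = 0 := by linarith
      rcases mul_eq_zero.1 h0 with h1 | h1
      · exact absurd h1 (hμ i).ne'
      · rcases mul_eq_zero.1 h1 with h2 | h2
        · exact h2
        · exact absurd h2 (Real.exp_ne_zero _)
    obtain ⟨i0, hi0⟩ := hne
    exact hi0 (hh0 i0)
  have hsumneg : ∑ i, μ i * h i < 0 := lt_of_le_of_ne hle hstrict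
  refine ⟨hpos, ?_, hsumneg⟩
  by_contra hc
  push_neg at hc
  have : 0 ≤ ∑ i, μ i * h i :=
    Finset.sum_nonneg fun i _ => mul_nonneg (hμ i).le (hc i)
  linarith
end

section
/- Let h : V → ℝ be not identically zero, changing sign, with μ-average h̄ < 0. Then there exists u : V → ℝ such that Δ_p u = -h e^u on V. -/
open Finset Real

set_option linter.unusedSectionVars false
set_option linter.unusedVariables false


section phi
variable {p : ℝ} (hp : 1 < p)

noncomputable def sPhi (p : ℝ) (x : ℝ) : ℝ := |x| ^ (p - 2) * x
noncomputable def sPsi (p : ℝ) (x : ℝ) : ℝ := |x| ^ p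

lemma sPhi_zero : sPhi p 0 = 0 := by simp [sPhi]

lemma sPhi_neg (x : ℝ) : sPhi p (-x) = - sPhi p x := by simp [sPhi, mul_neg]

include hp

lemma sPhi_pos {x : ℝ} (hx : 0 < x) : 0 < sPhi p x := by
  have : (0:ℝ) < |x| ^ (p - 2) := rpow_pos_of_pos (abs_pos.mpr hx.ne') _
  exact mul_pos this hx

lemma sPhi_eq_zero_iff {x : ℝ} : sPhi p x = 0 ↔ x = 0 := by
  constructor
  · intro hx
    by_contra hx0
    rcases lt_or_gt_of_ne hx0 with h | h
    · have := sPhi_pos hp (x := -x) (by linarith)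
      rw [sPhi_neg] at this; linarith
    · have := sPhi_pos hp h; linarith
  · rintro rfl; exact sPhi_zero

lemma abs_sPhi (x : ℝ) : |sPhi p x| = |x| ^ (p - 1) := by
  rcases eq_or_ne x 0 with rfl | hx
  · simp [sPhi_zero, Real.zero_rpow (by linarith : p - 1 ≠ 0)]
  · have h0 : (0:ℝ) < |x| := abs_pos.mpr hx
    rw [sPhi, abs_mul, abs_rpow_of_nonneg (abs_nonneg x), abs_abs]
    rw [show p - 1 = (p - 2) + 1 by ring, rpow_add h0, rpow_one]

lemma continuous_sPhi : Continuous (sPhi p) := by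
  rw [continuous_iff_continuousAt]
  intro x
  rcases eq_or_ne x 0 with rfl | hx
  · have hc : Continuous fun y : ℝ => |y| ^ (p - 1) := by
      exact continuous_abs.rpow_const (fun y => Or.inr (by linarith))
    have : Filter.Tendsto (fun y : ℝ => |y| ^ (p - 1)) (nhds 0) (nhds 0) := by
      simpa [Real.zero_rpow (by linarith : p - 1 ≠ 0)] using hc.tendsto 0
    have := squeeze_zero_norm (f := sPhi p)
      (fun y => by rw [Real.norm_eq_abs, abs_sPhi hp y]) this
    simpa [ContinuousAt, sPhi_zero] using this
  · exact (((continuous_abs.continuousAt).rpow_const (Or.inl (abs_ne_zero.mpr hx))).mul continuousAt_id)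

lemma hasDerivAt_sPsi (x : ℝ) : HasDerivAt (sPsi p) (p * sPhi p x) x := by
  rcases lt_trichotomy x 0 with h | rfl | h
  · have key : HasDerivAt (fun y : ℝ => (-y) ^ p) (-(p * (-x) ^ (p - 1))) x := by
      have h1 : HasDerivAt (fun y : ℝ => -y) (-1) x := (hasDerivAt_id x).neg
      have h2 : HasDerivAt (fun z : ℝ => z ^ p) (p * (-x) ^ (p - 1)) (-x) :=
        (Real.hasStrictDerivAt_rpow_const (Or.inl (by linarith : -x ≠ 0))).hasDerivAt
      exact (h2.comp x h1).congr_deriv (by ring)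
    have heq : sPsi p =ᶠ[nhds x] fun y => (-y) ^ p := by
      filter_upwards [Iio_mem_nhds h] with y hy
      rw [sPsi, abs_of_neg hy]
    have := key.congr_of_eventuallyEq heq
    refine this.congr_deriv (Eq.symm ?_)
    have hx : (-x)⁻¹ * x = -1 := by
      rw [inv_mul_eq_div, div_neg, div_self h.ne]
    rw [sPhi, abs_of_neg h, show p - 2 = (p-1) + (-1) by ring,
      rpow_add (by linarith : (0:ℝ) < -x), rpow_neg_one, mul_assoc, hx]
    ring
  · rw [sPhi_zero, mul_zero]
    rw [hasDerivAt_iff_tendsto_slope]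
    apply squeeze_zero_norm' (a := fun y : ℝ => |y| ^ (p - 1))
    · filter_upwards [self_mem_nhdsWithin] with y (hy : y ≠ 0)
      have h0 : (0:ℝ) < |y| := abs_pos.mpr hy
      have : |slope (sPsi p) 0 y| = |y| ^ (p - 1) := by
        rw [slope_def_field, sPsi, sPsi]
        rw [abs_zero, Real.zero_rpow (by linarith : p ≠ 0), sub_zero, sub_zero, abs_div,
          abs_rpow_of_nonneg (abs_nonneg y), abs_abs,
          show p - 1 = p + (-1) by ring, rpow_add h0, rpow_neg_one, div_eq_mul_inv]
      rw [Real.norm_eq_abs, this]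
    · have hc : Continuous fun y : ℝ => |y| ^ (p - 1) :=
        continuous_abs.rpow_const (fun y => Or.inr (by linarith))
      have := (hc.tendsto 0).mono_left (nhdsWithin_le_nhds (s := {(0:ℝ)}ᶜ))
      simpa [Real.zero_rpow (by linarith : p - 1 ≠ 0)] using this
  · have key : HasDerivAt (fun y : ℝ => y ^ p) (p * x ^ (p - 1)) x :=
      (Real.hasStrictDerivAt_rpow_const (Or.inl h.ne')).hasDerivAt
    have heq : sPsi p =ᶠ[nhds x] fun y => y ^ p := by
      filter_upwards [Ioi_mem_nhds h] with y hy
      rw [sPsi, abs_of_pos hy]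
    have := key.congr_of_eventuallyEq heq
    refine this.congr_deriv (Eq.symm ?_)
    congr 1
    rw [sPhi, abs_of_pos h, show p - 2 = (p-1) + (-1) by ring, rpow_add h, rpow_neg_one]
    field_simp

lemma contDiff_sPsi : ContDiff ℝ 1 (sPsi p) := by
  rw [contDiff_one_iff_deriv]
  constructor
  · exact fun x => (hasDerivAt_sPsi hp x).differentiableAt
  · have : deriv (sPsi p) = fun x => p * sPhi p x :=
      funext fun x => (hasDerivAt_sPsi hp x).deriv
    rw [this]
    exact continuous_const.mul (continuous_sPhi hp)

lemma sPsi_nonneg (x : ℝ) : 0 ≤ sPsi p x := rpow_nonneg (abs_nonneg x) p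

end phi

section funs
open Real Finset
variable {V : Type*} [Fintype V]

noncomputable def cW (A : V → V → Prop) [DecidableRel A] (ω : V → V → ℝ) : V → V → ℝ :=
  fun i j => if A i j then ω i j else 0

noncomputable def Ifun (p : ℝ) (A : V → V → Prop) [DecidableRel A] (ω : V → V → ℝ)
    (u : V → ℝ) : ℝ := (1/2) * ∑ i, ∑ j, cW A ω i j * sPsi p (u j - u i)

noncomputable def Gfun (μ h : V → ℝ) (u : V → ℝ) : ℝ := ∑ i, μ i * h i * Real.exp (u i)

noncomputable def Sfun (p : ℝ) (A : V → V → Prop) [DecidableRel A] (ω : V → V → ℝ)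
    (u : V → ℝ) (k : V) : ℝ := ∑ j, cW A ω k j * sPhi p (u j - u k)

noncomputable def Lmap (i j : V) : (V → ℝ) →L[ℝ] ℝ :=
  (ContinuousLinearMap.proj (R := ℝ) (φ := fun _ : V => ℝ) j) -
    (ContinuousLinearMap.proj (R := ℝ) (φ := fun _ : V => ℝ) i)

lemma Lmap_coe (i j : V) : ⇑(Lmap i j) = fun u : V → ℝ => u j - u i := rfl

lemma Lmap_apply (i j : V) (u : V → ℝ) : Lmap i j u = u j - u i := rfl

noncomputable def Ider (p : ℝ) (A : V → V → Prop) [DecidableRel A] (ω : V → V → ℝ)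
    (u : V → ℝ) : (V → ℝ) →L[ℝ] ℝ :=
  (1/2 : ℝ) • ∑ i, ∑ j, (cW A ω i j * (p * sPhi p (u j - u i))) • Lmap i j

noncomputable def Gder (μ h : V → ℝ) (u : V → ℝ) : (V → ℝ) →L[ℝ] ℝ :=
  ∑ i, (μ i * h i * Real.exp (u i)) • (ContinuousLinearMap.proj i : (V → ℝ) →L[ℝ] ℝ)

variable {p : ℝ} (hp : 1 < p) (A : V → V → Prop) [DecidableRel A] (ω : V → V → ℝ)

lemma pLap_eq_Sfun (μ : V → ℝ) (u : V → ℝ) (i : V) :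
    pLap p A ω μ u i = (1 / μ i) * Sfun p A ω u i := by
  unfold pLap Sfun cW sPhi
  congr 1
  refine Finset.sum_congr rfl fun j _ => ?_
  split_ifs with hij
  · ring
  · simp

include hp

lemma hasFDerivAt_Ifun (u : V → ℝ) : HasFDerivAt (Ifun p A ω) (Ider p A ω u) u := by
  have hterm : ∀ i j : V, HasFDerivAt (fun u : V → ℝ => cW A ω i j * sPsi p (u j - u i))
      ((cW A ω i j * (p * sPhi p (u j - u i))) • Lmap i j) u := by
    intro i j
    have hL : HasFDerivAt (fun u : V → ℝ => u j - u i) (Lmap i j) u := by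
      have := (Lmap i j).hasFDerivAt (x := u); rwa [Lmap_coe] at this
    have h1 := (hasDerivAt_sPsi hp (u j - u i)).comp_hasFDerivAt u hL
    have h2 := h1.const_mul (cW A ω i j)
    rwa [smul_smul] at h2
  have hsum : HasFDerivAt (fun u : V → ℝ => ∑ i, ∑ j, cW A ω i j * sPsi p (u j - u i))
      (∑ i, ∑ j, (cW A ω i j * (p * sPhi p (u j - u i))) • Lmap i j) u :=
    HasFDerivAt.fun_sum fun i _ => HasFDerivAt.fun_sum fun j _ => hterm i j
  have := hsum.const_mul (1/2 : ℝ)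
  exact this

lemma contDiff_Ifun : ContDiff ℝ 1 (Ifun p A ω) := by
  unfold Ifun
  refine ContDiff.mul contDiff_const ?_
  refine ContDiff.sum fun i _ => ContDiff.sum fun j _ => ContDiff.mul contDiff_const ?_
  have := (contDiff_sPsi hp).comp ((Lmap i j).contDiff)
  rwa [Lmap_coe] at this

lemma hasStrictFDerivAt_Ifun (u : V → ℝ) :
    HasStrictFDerivAt (Ifun p A ω) (Ider p A ω u) u := by
  have h := ((contDiff_Ifun (A := A) (ω := ω) hp).contDiffAt
    (x := u)).hasStrictFDerivAt one_ne_zero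
  rwa [(hasFDerivAt_Ifun hp A ω u).fderiv] at h

omit hp in
lemma hasStrictFDerivAt_Gfun (μ h : V → ℝ) (u : V → ℝ) :
    HasStrictFDerivAt (Gfun μ h) (Gder μ h u) u := by
  refine HasStrictFDerivAt.fun_sum fun i _ => ?_
  have hproj : HasStrictFDerivAt (fun u : V → ℝ => u i)
      (ContinuousLinearMap.proj i : (V → ℝ) →L[ℝ] ℝ) u :=
    (ContinuousLinearMap.proj i : (V → ℝ) →L[ℝ] ℝ).hasStrictFDerivAt
  have h1 := (Real.hasStrictDerivAt_exp (u i)).comp_hasStrictFDerivAt u hproj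
  have h2 := h1.const_mul (μ i * h i)
  rw [smul_smul] at h2
  exact h2

end funs

section chunk3
open Real Finset
variable {V : Type*} [Fintype V] [DecidableEq V] {p : ℝ} (hp : 1 < p)
variable (A : V → V → Prop) [DecidableRel A] (ω : V → V → ℝ)

omit hp

lemma sPhi_nonneg' {x : ℝ} (hx : 0 ≤ x) (hp : 1 < p) : 0 ≤ sPhi p x := by
  rcases hx.eq_or_lt with rfl | hx'
  · rw [sPhi_zero]
  · exact (sPhi_pos hp hx').le

lemma sPhi_nonpos' {x : ℝ} (hx : x ≤ 0) (hp : 1 < p) : sPhi p x ≤ 0 := by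
  have := sPhi_nonneg' (x := -x) (by linarith) hp
  rw [sPhi_neg] at this; linarith

lemma cW_symm (hA : Symmetric A) (hωsymm : ∀ i j, ω i j = ω j i) (i j : V) :
    cW A ω i j = cW A ω j i := by
  unfold cW
  by_cases hij : A i j
  · rw [if_pos hij, if_pos (hA hij), hωsymm]
  · rw [if_neg hij, if_neg (fun hji => hij (hA hji))]

lemma cW_nonneg (hωpos : ∀ i j, A i j → 0 < ω i j) (i j : V) : 0 ≤ cW A ω i j := by
  unfold cW; split_ifs with hij
  · exact (hωpos i j hij).le
  · exact le_refl 0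

lemma Ifun_nonneg (hωpos : ∀ i j, A i j → 0 < ω i j) (hp : 1 < p) (u : V → ℝ) :
    0 ≤ Ifun p A ω u := by
  unfold Ifun
  apply mul_nonneg (by norm_num)
  exact Finset.sum_nonneg fun i _ => Finset.sum_nonneg fun j _ =>
    mul_nonneg (cW_nonneg A ω hωpos i j) (sPsi_nonneg hp _)

lemma Ifun_shift (u : V → ℝ) (c : ℝ) : Ifun p A ω (fun i => u i + c) = Ifun p A ω u := by
  unfold Ifun
  congr 1
  refine Finset.sum_congr rfl fun i _ => Finset.sum_congr rfl fun j _ => ?_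
  congr 2
  ring

lemma Sfun_shift (u : V → ℝ) (c : ℝ) (k : V) :
    Sfun p A ω (fun i => u i + c) k = Sfun p A ω u k := by
  unfold Sfun
  refine Finset.sum_congr rfl fun j _ => ?_
  congr 2
  ring

lemma Gfun_shift (μ h : V → ℝ) (u : V → ℝ) (c : ℝ) :
    Gfun μ h (fun i => u i + c) = Real.exp c * Gfun μ h u := by
  unfold Gfun
  rw [Finset.mul_sum]
  refine Finset.sum_congr rfl fun i _ => ?_
  rw [Real.exp_add]
  ring

lemma Gder_single (μ h u : V → ℝ) (k : V) :
    Gder μ h u (Pi.single k 1) = μ k * h k * Real.exp (u k) := by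
  unfold Gder
  rw [ContinuousLinearMap.sum_apply]
  have : ∀ i : V, ((μ i * h i * Real.exp (u i)) •
      (ContinuousLinearMap.proj (R := ℝ) (φ := fun _ : V => ℝ) i)) (Pi.single k 1)
      = if i = k then μ i * h i * Real.exp (u i) else 0 := by
    intro i
    rw [ContinuousLinearMap.smul_apply, ContinuousLinearMap.proj_apply, Pi.single_apply]
    split_ifs <;> simp
  rw [Finset.sum_congr rfl (fun i _ => this i), Finset.sum_ite_eq' Finset.univ k]
  simp

lemma Ider_single (hA : Symmetric A) (hωsymm : ∀ i j, ω i j = ω j i) (u : V → ℝ) (k : V)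
    (hp : 1 < p) :
    Ider p A ω u (Pi.single k 1) = -(p * Sfun p A ω u k) := by
  set t : V → V → ℝ := fun i j => cW A ω i j * (p * sPhi p (u j - u i)) with ht
  have happ : Ider p A ω u (Pi.single k 1)
      = (1/2) * ∑ i, ∑ j, t i j * ((Pi.single k 1 : V → ℝ) j - (Pi.single k 1 : V → ℝ) i) := by
    unfold Ider
    rw [ContinuousLinearMap.smul_apply, ContinuousLinearMap.sum_apply]
    rw [smul_eq_mul]
    congr 1
    refine Finset.sum_congr rfl fun i _ => ?_
    rw [ContinuousLinearMap.sum_apply]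
    refine Finset.sum_congr rfl fun j _ => ?_
    rw [ContinuousLinearMap.smul_apply, smul_eq_mul, Lmap_apply]
  rw [happ]
  have hsplit : ∀ i j : V, t i j * ((Pi.single k 1 : V → ℝ) j - (Pi.single k 1 : V → ℝ) i)
      = (if j = k then t i j else 0) - (if i = k then t i j else 0) := by
    intro i j
    rw [Pi.single_apply, Pi.single_apply]
    split_ifs <;> ring
  simp only [hsplit]
  rw [Finset.sum_congr rfl (fun i (_ : i ∈ univ) => Finset.sum_sub_distrib _ _)]
  rw [Finset.sum_sub_distrib]
  have h1 : ∑ i : V, ∑ j : V, (if j = k then t i j else 0) = ∑ i : V, t i k := by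
    refine Finset.sum_congr rfl fun i _ => ?_
    rw [Finset.sum_ite_eq' Finset.univ k (fun j => t i j), if_pos (Finset.mem_univ k)]
  have h2 : ∑ i : V, ∑ j : V, (if i = k then t i j else 0) = ∑ j : V, t k j := by
    rw [Finset.sum_comm]
    refine Finset.sum_congr rfl fun j _ => ?_
    rw [Finset.sum_ite_eq' Finset.univ k (fun i => t i j), if_pos (Finset.mem_univ k)]
  rw [h1, h2]
  have h3 : ∀ i : V, t i k = - t k i := by
    intro i
    rw [ht]
    simp only
    rw [cW_symm A ω hA hωsymm i k, show u k - u i = -(u i - u k) by ring, sPhi_neg]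
    ring
  rw [Finset.sum_congr rfl (fun i (_ : i ∈ univ) => h3 i), Finset.sum_neg_distrib]
  have h4 : ∑ j : V, t k j = p * Sfun p A ω u k := by
    rw [Sfun, Finset.mul_sum]
    refine Finset.sum_congr rfl fun j _ => ?_
    rw [ht]; ring
  rw [h4]
  ring

lemma edge_osc (hωpos : ∀ i j, A i j → 0 < ω i j) (hp : 1 < p) {b c : V} (hbc : A b c)
    (u : V → ℝ) : |u c - u b| ≤ (2 * Ifun p A ω u / ω b c) ^ p⁻¹ := by
  have hω : 0 < ω b c := hωpos b c hbc
  have key : ω b c * sPsi p (u c - u b) ≤ 2 * Ifun p A ω u := by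
    have h2I : 2 * Ifun p A ω u = ∑ i, ∑ j, cW A ω i j * sPsi p (u j - u i) := by
      unfold Ifun; ring
    rw [h2I]
    have hterm : ∀ i j : V, 0 ≤ cW A ω i j * sPsi p (u j - u i) := fun i j =>
      mul_nonneg (cW_nonneg A ω hωpos i j) (sPsi_nonneg hp _)
    calc ω b c * sPsi p (u c - u b) = cW A ω b c * sPsi p (u c - u b) := by
          rw [cW, if_pos hbc]
      _ ≤ ∑ j, cW A ω b j * sPsi p (u j - u b) :=
          Finset.single_le_sum (fun j _ => hterm b j) (Finset.mem_univ c)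
      _ ≤ ∑ i, ∑ j, cW A ω i j * sPsi p (u j - u i) :=
          Finset.single_le_sum (f := fun i => ∑ j, cW A ω i j * sPsi p (u j - u i))
            (fun i _ => Finset.sum_nonneg fun j _ => hterm i j) (Finset.mem_univ b)
  have h1 : |u c - u b| ^ p ≤ 2 * Ifun p A ω u / ω b c := by
    rw [le_div_iff₀ hω, mul_comm]
    exact key
  have h2 : (|u c - u b| ^ p) ^ p⁻¹ ≤ (2 * Ifun p A ω u / ω b c) ^ p⁻¹ :=
    Real.rpow_le_rpow (Real.rpow_nonneg (abs_nonneg _) p) h1 (by positivity)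
  rwa [Real.rpow_rpow_inv (abs_nonneg _) (by linarith : p ≠ 0)] at h2

lemma coord_bound (hA : Symmetric A) (hωpos : ∀ i j, A i j → 0 < ω i j) (hp : 1 < p)
    (i₀ : V) (M : ℝ) (hconn : ∀ i j : V, Relation.ReflTransGen A i j) (hM : 0 ≤ M) :
    ∀ j : V, ∃ C : ℝ, ∀ u : V → ℝ, Ifun p A ω u ≤ M → |u j - u i₀| ≤ C := by
  intro j
  induction hconn i₀ j with
  | refl => exact ⟨0, fun u _ => by simp⟩
  | @tail b c hab hbc ih =>
    obtain ⟨C, hC⟩ := ih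
    refine ⟨(2 * M / ω b c) ^ p⁻¹ + C, fun u hu => ?_⟩
    have h1 : |u c - u i₀| ≤ |u c - u b| + |u b - u i₀| := abs_sub_le _ _ _
    have h2 : |u c - u b| ≤ (2 * M / ω b c) ^ p⁻¹ := by
      refine (edge_osc A ω hωpos hp hbc u).trans ?_
      have hωbc := hωpos b c hbc
      have hI := Ifun_nonneg A ω hωpos hp u
      apply Real.rpow_le_rpow (div_nonneg (by linarith) hωbc.le) ?_ (by positivity)
      gcongr
    linarith [hC u hu]

end chunk3

section chunk4
open Real Finset
variable {V : Type*} [Fintype V] [DecidableEq V] {p : ℝ}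
variable (A : V → V → Prop) [DecidableRel A] (ω : V → V → ℝ)

lemma max_principle (hA : Symmetric A) (hωpos : ∀ i j, A i j → 0 < ω i j) (hp : 1 < p)
    (hconn : ∀ i j : V, Relation.ReflTransGen A i j) (u : V → ℝ)
    (hS : ∀ k, Sfun p A ω u k = 0) (k₀ : V) (hk₀ : ∀ i, u i ≤ u k₀) :
    ∀ j, u j = u k₀ := by
  have step : ∀ i, u i = u k₀ → ∀ j, A i j → u j = u k₀ := by
    intro i hi j hij
    have hterms : ∀ j' : V, cW A ω i j' * sPhi p (u j' - u i) ≤ 0 := by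
      intro j'
      apply mul_nonpos_of_nonneg_of_nonpos (cW_nonneg A ω hωpos i j')
      apply sPhi_nonpos' _ hp
      rw [hi]
      linarith [hk₀ j']
    have hzero := (Finset.sum_eq_zero_iff_of_nonpos (fun j' _ => hterms j')).mp (hS i) j
      (Finset.mem_univ j)
    rw [cW, if_pos hij] at hzero
    have := (mul_eq_zero.mp hzero).resolve_left (hωpos i j hij).ne'
    have := (sPhi_eq_zero_iff hp).mp this
    have : u j = u i := by linarith [sub_eq_zero.mp this]
    rw [this, hi]
  intro j
  induction hconn k₀ j with
  | refl => rfl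
  | @tail b c hab hbc ih => exact step b ih c hbc

lemma sym_nonneg (hA : Symmetric A) (hωsymm : ∀ i j, ω i j = ω j i)
    (hωpos : ∀ i j, A i j → 0 < ω i j) (hp : 1 < p) (u : V → ℝ) :
    0 ≤ ∑ k, Sfun p A ω u k * Real.exp (-u k) := by
  set T : V → V → ℝ := fun k j => cW A ω k j * sPhi p (u j - u k) * Real.exp (-u k) with hT
  have hsum : ∑ k, Sfun p A ω u k * Real.exp (-u k) = ∑ k, ∑ j, T k j := by
    refine Finset.sum_congr rfl fun k _ => ?_
    rw [Sfun, Finset.sum_mul]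
  rw [hsum]
  have hswap : ∑ k, ∑ j, T k j = ∑ k, ∑ j, T j k := Finset.sum_comm
  have hpair : ∀ k j : V, T k j + T j k
      = cW A ω k j * sPhi p (u j - u k) * (Real.exp (-u k) - Real.exp (-u j)) := by
    intro k j
    rw [hT]
    simp only
    rw [cW_symm A ω hA hωsymm j k, show u k - u j = -(u j - u k) by ring, sPhi_neg]
    ring
  have hpair_nonneg : ∀ k j : V, 0 ≤ T k j + T j k := by
    intro k j
    rw [hpair k j]
    rcases le_total (u k) (u j) with hle | hle
    · apply mul_nonneg (mul_nonneg (cW_nonneg A ω hωpos k j)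
        (sPhi_nonneg' (by linarith) hp))
      have : Real.exp (-u j) ≤ Real.exp (-u k) := Real.exp_le_exp.mpr (by linarith)
      linarith
    · have h1 : cW A ω k j * sPhi p (u j - u k) ≤ 0 :=
        mul_nonpos_of_nonneg_of_nonpos (cW_nonneg A ω hωpos k j)
          (sPhi_nonpos' (by linarith) hp)
      have h2 : Real.exp (-u k) ≤ Real.exp (-u j) := Real.exp_le_exp.mpr (by linarith)
      nlinarith
  have h2 : 0 ≤ ∑ k, ∑ j, (T k j + T j k) :=
    Finset.sum_nonneg fun k _ => Finset.sum_nonneg fun j _ => hpair_nonneg k j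
  have h3 : ∑ k, ∑ j, (T k j + T j k) = (∑ k, ∑ j, T k j) + ∑ k, ∑ j, T j k := by
    rw [← Finset.sum_add_distrib]
    exact Finset.sum_congr rfl fun k _ => Finset.sum_add_distrib
  rw [h3, ← hswap] at h2
  linarith

lemma exists_G_zero (μ h : V → ℝ) (hμ : ∀ i, 0 < μ i) (hpos : ∃ i, 0 < h i)
    (hneg : ∃ i, h i < 0) : ∃ u : V → ℝ, Gfun μ h u = 0 := by
  set P := ∑ i ∈ Finset.univ.filter (fun i => 0 < h i), μ i * h i with hPdef
  set N := ∑ i ∈ Finset.univ.filter (fun i => ¬ 0 < h i), μ i * h i with hNdef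
  set f : ℝ → ℝ := fun t => Real.exp t * P + Real.exp (-t) * N with hfdef
  have hsplit : ∀ t : ℝ, Gfun μ h (fun i => if 0 < h i then t else -t) = f t := by
    intro t
    rw [hfdef]
    simp only
    unfold Gfun
    rw [← Finset.sum_filter_add_sum_filter_not Finset.univ (fun i => 0 < h i)]
    congr 1
    · rw [hPdef, Finset.mul_sum]
      refine Finset.sum_congr rfl fun i hi => ?_
      have h2 := (Finset.mem_filter.mp hi).2
      simp only [h2, if_true]
      ring
    · rw [hNdef, Finset.mul_sum]
      refine Finset.sum_congr rfl fun i hi => ?_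
      have h2 := (Finset.mem_filter.mp hi).2
      simp only [h2, if_false]
      ring
  obtain ⟨i₀, hi₀⟩ := hpos
  obtain ⟨i₁, hi₁⟩ := hneg
  have hP : 0 < P := by
    apply Finset.sum_pos
    · intro i hi
      exact mul_pos (hμ i) (Finset.mem_filter.mp hi).2
    · exact ⟨i₀, Finset.mem_filter.mpr ⟨Finset.mem_univ _, hi₀⟩⟩
  have hN : N < 0 := by
    have := Finset.sum_lt_sum (s := Finset.univ.filter (fun i => ¬ 0 < h i))
      (f := fun i => μ i * h i) (g := fun _ => (0:ℝ))
      (fun i hi => mul_nonpos_of_nonneg_of_nonpos (hμ i).le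
        (le_of_not_gt (Finset.mem_filter.mp hi).2))
      ⟨i₁, Finset.mem_filter.mpr ⟨Finset.mem_univ _, not_lt.mpr hi₁.le⟩,
        mul_neg_of_pos_of_neg (hμ i₁) hi₁⟩
    simpa only [Finset.sum_const_zero] using this
  set T₁ := max 0 (Real.log ((1 - N)/P)) with hT₁
  set T₂ := max 0 (Real.log ((P + 1)/(-N))) with hT₂
  have hfT₁ : 1 ≤ f T₁ := by
    have hx : (0:ℝ) < (1 - N)/P := div_pos (by linarith) hP
    have he1 : (1 - N)/P ≤ Real.exp T₁ := by
      rw [← Real.exp_log hx]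
      exact Real.exp_le_exp.mpr (le_max_right _ _)
    have he2 : Real.exp (-T₁) ≤ 1 := Real.exp_le_one_iff.mpr (by simp [hT₁])
    have h1 : 1 - N ≤ Real.exp T₁ * P := by
      rw [div_le_iff₀ hP] at he1
      linarith
    have h2 : N ≤ Real.exp (-T₁) * N := by
      nlinarith [mul_nonneg (by linarith : (0:ℝ) ≤ 1 - Real.exp (-T₁))
        (by linarith : (0:ℝ) ≤ -N)]
    show 1 ≤ Real.exp T₁ * P + Real.exp (-T₁) * N
    linarith
  have hfT₂ : f (-T₂) ≤ -1 := by
    have hx : (0:ℝ) < (P + 1)/(-N) := div_pos (by linarith) (by linarith)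
    have he1 : (P + 1)/(-N) ≤ Real.exp T₂ := by
      rw [← Real.exp_log hx]
      exact Real.exp_le_exp.mpr (le_max_right _ _)
    have he2 : Real.exp (-T₂) ≤ 1 := Real.exp_le_one_iff.mpr (by simp [hT₂])
    have h1 : P + 1 ≤ Real.exp T₂ * (-N) := by
      rw [div_le_iff₀ (by linarith : (0:ℝ) < -N)] at he1
      linarith
    have h2 : Real.exp (-T₂) * P ≤ P := by
      nlinarith [mul_nonneg (by linarith : (0:ℝ) ≤ 1 - Real.exp (-T₂)) hP.le]
    have h3 : Real.exp T₂ * N ≤ -(P+1) := by linarith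
    have : f (-T₂) = Real.exp (-T₂) * P + Real.exp T₂ * N := by
      rw [hfdef]; simp
    rw [this]
    linarith
  have hcont : Continuous f := by
    rw [hfdef]
    exact (Real.continuous_exp.mul continuous_const).add
      ((Real.continuous_exp.comp continuous_neg).mul continuous_const)
  have hab : -T₂ ≤ T₁ := le_trans (neg_nonpos.mpr (le_max_left _ _)) (le_max_left _ _)
  have := intermediate_value_Icc hab hcont.continuousOn
  have h0mem : (0:ℝ) ∈ Set.Icc (f (-T₂)) (f T₁) := ⟨by linarith, by linarith⟩
  obtain ⟨t₀, _, ht₀⟩ := this h0mem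
  exact ⟨fun i => if 0 < h i then t₀ else -t₀, by rw [hsplit t₀]; exact ht₀⟩

end chunk4

/-- if `h ≢ 0` changes sign and `h̄ < 0`, then `Δ_p u = -h e^u` is solvable. -/
theorem stmt13 {V : Type*} [Fintype V] [Nonempty V] (p : ℝ) (hp : 1 < p)
    (A : V → V → Prop) [DecidableRel A] (hA : Symmetric A)
    (ω : V → V → ℝ) (hωsymm : ∀ i j, ω i j = ω j i) (hωpos : ∀ i j, A i j → 0 < ω i j)
    (μ : V → ℝ) (hμ : ∀ i, 0 < μ i)
    (hconn : ∀ i j : V, Relation.ReflTransGen A i j) (h : V → ℝ) (hne : ∃ i, h i ≠ 0)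
    (hpos : ∃ i, 0 < h i) (hneg : ∃ i, h i < 0)
    (hbar : (∑ i, μ i * h i) / (∑ i, μ i) < 0) :
    ∃ u : V → ℝ, ∀ i, pLap p A ω μ u i = - h i * Real.exp (u i) := by
  classical
  have hμsum : 0 < ∑ i, μ i := Finset.sum_pos (fun i _ => hμ i) Finset.univ_nonempty
  have hsum : ∑ i, μ i * h i < 0 := by
    by_contra hc
    push_neg at hc
    have := div_nonneg hc hμsum.le
    linarith
  obtain ⟨u₁, hu₁⟩ := exists_G_zero μ h hμ hpos hneg
  set i₀ : V := Classical.arbitrary V with hi₀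
  set u₂ : V → ℝ := fun i => u₁ i + (-(u₁ i₀)) with hu₂def
  have hGu₂ : Gfun μ h u₂ = 0 := by rw [hu₂def, Gfun_shift, hu₁, mul_zero]
  have hu₂i₀ : u₂ i₀ = 0 := by simp [hu₂def]
  set M := Ifun p A ω u₂ with hMdef
  have hM0 : 0 ≤ M := Ifun_nonneg A ω hωpos hp u₂
  set K : Set (V → ℝ) := {u | Gfun μ h u = 0 ∧ u i₀ = 0 ∧ Ifun p A ω u ≤ M} with hKdef
  have hGcont : Continuous (Gfun μ h) := by
    unfold Gfun
    exact continuous_finset_sum _ fun i _ =>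
      continuous_const.mul (Real.continuous_exp.comp (continuous_apply i))
  have hIcont : Continuous (Ifun p A ω) := (contDiff_Ifun hp A ω).continuous
  have hKclosed : IsClosed K := by
    rw [hKdef, Set.setOf_and, Set.setOf_and]
    exact (isClosed_eq hGcont continuous_const).inter
      ((isClosed_eq (continuous_apply i₀) continuous_const).inter
        (isClosed_le hIcont continuous_const))
  have hKbdd : Bornology.IsBounded K := by
    choose C hC using coord_bound A ω hA hωpos hp i₀ M hconn hM0
    set R := ∑ j, |C j| with hR
    have hsub : K ⊆ Metric.closedBall 0 R := by
      intro u hu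
      rw [Metric.mem_closedBall, dist_zero_right]
      have hR0 : 0 ≤ R := Finset.sum_nonneg fun j _ => abs_nonneg _
      rw [pi_norm_le_iff_of_nonneg hR0]
      intro j
      have h1 : |u j - u i₀| ≤ C j := hC j u hu.2.2
      rw [hu.2.1, sub_zero] at h1
      have h2 : C j ≤ R := by
        calc C j ≤ |C j| := le_abs_self _
          _ ≤ R := Finset.single_le_sum (f := fun j => |C j|)
              (fun j _ => abs_nonneg _) (Finset.mem_univ j)
      calc ‖u j‖ = |u j| := rfl
        _ ≤ C j := h1
        _ ≤ R := h2
    exact Metric.isBounded_closedBall.subset hsub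
  have hKcpt : IsCompact K := Metric.isCompact_of_isClosed_isBounded hKclosed hKbdd
  have hKne : u₂ ∈ K := ⟨hGu₂, hu₂i₀, le_refl M⟩
  obtain ⟨u₀, hu₀K, hu₀min⟩ := hKcpt.exists_isMinOn ⟨u₂, hKne⟩ hIcont.continuousOn
  have hGu₀ : Gfun μ h u₀ = 0 := hu₀K.1
  have hIu₀M : Ifun p A ω u₀ ≤ M := isMinOn_iff.mp hu₀min u₂ hKne
  have hglobal : ∀ v : V → ℝ, Gfun μ h v = 0 → Ifun p A ω u₀ ≤ Ifun p A ω v := by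
    intro v hGv
    by_cases hIv : Ifun p A ω v ≤ M
    · have hv'K : (fun i => v i + (-(v i₀))) ∈ K := by
        refine ⟨by rw [Gfun_shift, hGv, mul_zero], by simp, by rw [Ifun_shift]; exact hIv⟩
      have := isMinOn_iff.mp hu₀min _ hv'K
      rwa [Ifun_shift] at this
    · linarith [le_of_not_ge hIv]
  have hminB : IsMinOn (Ifun p A ω) {x : V → ℝ | Gfun μ h x = Gfun μ h u₀} u₀ := by
    apply isMinOn_iff.mpr
    intro x hx
    rw [Set.mem_setOf_eq, hGu₀] at hx
    exact hglobal x hx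
  have hextr : IsLocalExtrOn (Ifun p A ω) {x : V → ℝ | Gfun μ h x = Gfun μ h u₀} u₀ :=
    (hminB.filter_mono (Filter.le_principal_iff.mpr self_mem_nhdsWithin)).isExtr
  obtain ⟨a, b, hab, heq⟩ := hextr.exists_multipliers_of_hasStrictFDerivAt_1d
    (hasStrictFDerivAt_Gfun μ h u₀) (hasStrictFDerivAt_Ifun hp A ω u₀)
  have hkey : ∀ k, a * (μ k * h k * Real.exp (u₀ k)) = b * (p * Sfun p A ω u₀ k) := by
    intro k
    have happ := DFunLike.congr_fun heq (Pi.single k 1)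
    rw [ContinuousLinearMap.add_apply, ContinuousLinearMap.smul_apply,
      ContinuousLinearMap.smul_apply, ContinuousLinearMap.zero_apply,
      Gder_single, Ider_single A ω hA hωsymm u₀ k hp, smul_eq_mul, smul_eq_mul] at happ
    have : a * (μ k * h k * Real.exp (u₀ k)) - b * (p * Sfun p A ω u₀ k) = 0 := by
      rw [← happ]; ring
    linarith
  have hb : b ≠ 0 := by
    intro hb0
    obtain ⟨k, hk⟩ := hne
    have h1 := hkey k
    rw [hb0, zero_mul] at h1
    have h2 : μ k * h k * Real.exp (u₀ k) ≠ 0 :=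
      mul_ne_zero (mul_ne_zero (hμ k).ne' hk) (Real.exp_pos _).ne'
    have ha0 : a = 0 := by
      rcases mul_eq_zero.mp h1 with h | h
      · exact h
      · exact absurd h h2
    exact hab (by rw [ha0, hb0]; rfl)
  have hbp : b * p ≠ 0 := mul_ne_zero hb (by linarith)
  set κ := a / (b * p) with hκdef
  have hSκ : ∀ k, Sfun p A ω u₀ k = κ * (μ k * h k * Real.exp (u₀ k)) := by
    intro k
    rw [hκdef, div_mul_eq_mul_div, eq_div_iff hbp]
    linear_combination (-1 : ℝ) * hkey k
  rcases lt_trichotomy κ 0 with hκneg | hκ0 | hκpos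
  · refine ⟨fun i => u₀ i + Real.log (-κ), fun i => ?_⟩
    show pLap p A ω μ (fun i => u₀ i + Real.log (-κ)) i
      = -h i * Real.exp (u₀ i + Real.log (-κ))
    rw [pLap_eq_Sfun, Sfun_shift, hSκ i, Real.exp_add, Real.exp_log (by linarith : 0 < -κ)]
    have hμi := (hμ i).ne'
    field_simp
  · exfalso
    have hS0 : ∀ k, Sfun p A ω u₀ k = 0 := fun k => by rw [hSκ k, hκ0, zero_mul]
    obtain ⟨k₀, _, hk₀⟩ := Finset.exists_max_image Finset.univ u₀
      ⟨Classical.arbitrary V, Finset.mem_univ _⟩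
    have hconst := max_principle A ω hA hωpos hp hconn u₀ hS0 k₀
      (fun i => hk₀ i (Finset.mem_univ i))
    have hGval : Gfun μ h u₀ = Real.exp (u₀ k₀) * ∑ i, μ i * h i := by
      unfold Gfun
      rw [Finset.mul_sum]
      exact Finset.sum_congr rfl fun i _ => by rw [hconst i]; ring
    rw [hGu₀] at hGval
    nlinarith [Real.exp_pos (u₀ k₀)]
  · exfalso
    have h1 : ∑ k, Sfun p A ω u₀ k * Real.exp (-u₀ k) = κ * ∑ i, μ i * h i := by
      rw [Finset.mul_sum]
      refine Finset.sum_congr rfl fun k _ => ?_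
      rw [hSκ k, show κ * (μ k * h k * Real.exp (u₀ k)) * Real.exp (-u₀ k)
        = κ * (μ k * h k) * (Real.exp (u₀ k) * Real.exp (-u₀ k)) from by ring,
        ← Real.exp_add, add_neg_cancel, Real.exp_zero, mul_one]
    have h2 := sym_nonneg A ω hA hωsymm hωpos hp u₀
    rw [h1] at h2
    nlinarith
end

section
/- Let c > 0. The equation Δ_p u = c - h e^u has a solution u : V → ℝ if and only if h is positive somewhere on V. -/
open Finset Real

open Filter

lemma bern_aux {p : ℝ} (hp : 1 ≤ p) {x y : ℝ} (hy : 0 ≤ y) (hxy : y ≤ x) :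
    x ^ p - y ^ p ≤ p * x ^ (p - 1) * (x - y) := by
  rcases eq_or_lt_of_le (hy.trans hxy) with hx0 | hx0
  · rw [← hx0]
    have : y = 0 := le_antisymm (hxy.trans hx0.symm.le) hy
    subst this; simp
  · have hxne : x ≠ 0 := ne_of_gt hx0
    have hs : -1 ≤ y / x - 1 := by
      have : 0 ≤ y / x := div_nonneg hy hx0.le
      linarith
    have hB := one_add_mul_self_le_rpow_one_add hs hp
    rw [add_sub_cancel] at hB
    rw [Real.div_rpow hy hx0.le] at hB
    have hxp : 0 < x ^ p := Real.rpow_pos_of_pos hx0 p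
    have hB2 : (1 + p * (y / x - 1)) * x ^ p ≤ y ^ p := (le_div_iff₀ hxp).mp hB
    have hxp1 : x ^ p = x ^ (p - 1) * x := by
      rw [← Real.rpow_add_one hxne (p - 1)]; ring_nf
    have key : p * (y / x - 1) * x ^ p = p * x ^ (p - 1) * (y - x) := by
      rw [hxp1]; field_simp
    rw [add_mul, one_mul, key] at hB2
    have : p * x ^ (p - 1) * (x - y) = -(p * x ^ (p - 1) * (y - x)) := by ring
    rw [this]; linarith

lemma abs_rpow_sub_abs_rpow_le {p : ℝ} (hp : 1 ≤ p) (a b : ℝ) :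
    |(|a| ^ p - |b| ^ p)| ≤ p * max |a| |b| ^ (p - 1) * |a - b| := by
  have H : ∀ a b : ℝ, |b| ≤ |a| → |a| ^ p - |b| ^ p ≤ p * max |a| |b| ^ (p - 1) * |a - b| := by
    intro a b hba
    have h1 := bern_aux hp (abs_nonneg b) hba
    have h2 : |a| - |b| ≤ |a - b| := abs_sub_abs_le_abs_sub a b
    rw [max_eq_left hba]
    have hpow : (0:ℝ) ≤ p * |a| ^ (p - 1) := by positivity
    calc |a| ^ p - |b| ^ p ≤ p * |a| ^ (p - 1) * (|a| - |b|) := h1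
      _ ≤ p * |a| ^ (p - 1) * |a - b| := mul_le_mul_of_nonneg_left h2 hpow
  rcases le_total |b| |a| with hba | hab
  · have hnn : |b| ^ p ≤ |a| ^ p := Real.rpow_le_rpow (abs_nonneg b) hba (by linarith)
    rw [abs_of_nonneg (sub_nonneg.mpr hnn)]
    exact H a b hba
  · have hnn : |a| ^ p ≤ |b| ^ p := Real.rpow_le_rpow (abs_nonneg a) hab (by linarith)
    rw [abs_sub_comm, abs_of_nonneg (sub_nonneg.mpr hnn), max_comm, abs_sub_comm a b]
    exact H b a hab

lemma hasStrictDerivAt_abs_rpow {p : ℝ} (hp : 1 < p) (x : ℝ) :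
    HasStrictDerivAt (fun y : ℝ => |y| ^ p) (p * |x| ^ (p - 2) * x) x := by
  rcases lt_trichotomy x 0 with hx | hx | hx
  · -- x < 0 : near x, |y| = -y
    have hne : (-x) ≠ 0 := neg_ne_zero.mpr (ne_of_lt hx)
    have h1 : HasStrictDerivAt (fun y : ℝ => y ^ p) (p * (-x) ^ (p - 1)) (-x) :=
      Real.hasStrictDerivAt_rpow_const (Or.inl hne)
    have h2 : HasStrictDerivAt (fun y : ℝ => (-y) ^ p) (p * (-x) ^ (p - 1) * (-1)) x :=
      h1.comp x (hasStrictDerivAt_neg x)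
    have hev : (fun y : ℝ => |y| ^ p) =ᶠ[nhds x] fun y => (-y) ^ p := by
      filter_upwards [Iio_mem_nhds hx] with y hy
      rw [abs_of_neg hy]
    have h3 : HasStrictDerivAt (fun y : ℝ => |y| ^ p) (p * (-x) ^ (p - 1) * (-1)) x :=
      (h2.hasStrictFDerivAt.congr_of_eventuallyEq hev.symm)
    convert h3 using 1
    rw [abs_of_neg hx]
    rw [show p - 1 = (p - 2) + 1 by ring, Real.rpow_add_one hne]
    ring
  · -- x = 0
    subst hx
    have key : HasStrictFDerivAt (fun y : ℝ => |y| ^ p) (0 : ℝ →L[ℝ] ℝ) 0 := by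
      refine .of_isLittleO ?_
      rw [Asymptotics.isLittleO_iff]
      intro ε hε
      have hp0 : (0:ℝ) < p := by linarith
      have hp1 : (0:ℝ) < p - 1 := by linarith
      set δ : ℝ := (ε / p) ^ (p - 1)⁻¹ with hδ
      have hδpos : 0 < δ := Real.rpow_pos_of_pos (div_pos hε hp0) _
      have hδp : δ ^ (p - 1) = ε / p := by
        rw [hδ, ← Real.rpow_mul (le_of_lt (div_pos hε hp0)),
          inv_mul_cancel₀ (ne_of_gt hp1), Real.rpow_one]
      have hball : Metric.ball ((0:ℝ), (0:ℝ)) δ ∈ nhds ((0:ℝ), (0:ℝ)) :=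
        Metric.ball_mem_nhds _ hδpos
      filter_upwards [hball] with q hq
      simp only [Metric.mem_ball, Prod.dist_eq, Real.dist_eq, sub_zero, max_lt_iff] at hq
      obtain ⟨hq1, hq2⟩ := hq
      have hmax : max |q.1| |q.2| ^ (p - 1) ≤ ε / p := by
        rw [← hδp]
        exact Real.rpow_le_rpow (le_max_iff.mpr (Or.inl (abs_nonneg _)))
          (le_of_lt (max_lt hq1 hq2)) (le_of_lt hp1)
      simp only [ContinuousLinearMap.zero_apply, sub_zero, Real.norm_eq_abs]
      calc |(|q.1| ^ p - |q.2| ^ p)| ≤ p * max |q.1| |q.2| ^ (p - 1) * |q.1 - q.2| :=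
            abs_rpow_sub_abs_rpow_le (le_of_lt hp) q.1 q.2
        _ ≤ p * (ε / p) * |q.1 - q.2| := by
            apply mul_le_mul_of_nonneg_right _ (abs_nonneg _)
            exact mul_le_mul_of_nonneg_left hmax (le_of_lt hp0)
        _ = ε * |q.1 - q.2| := by field_simp
    have : HasStrictDerivAt (fun y : ℝ => |y| ^ p) 0 0 := by
      rw [hasStrictDerivAt_iff_hasStrictFDerivAt]
      rw [ContinuousLinearMap.toSpanSingleton_zero]
      exact key
    simpa using this
  · -- x > 0
    have hne : x ≠ 0 := ne_of_gt hx
    have h1 : HasStrictDerivAt (fun y : ℝ => y ^ p) (p * x ^ (p - 1)) x :=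
      Real.hasStrictDerivAt_rpow_const (Or.inl hne)
    have hev : (fun y : ℝ => |y| ^ p) =ᶠ[nhds x] fun y => y ^ p := by
      filter_upwards [Ioi_mem_nhds hx] with y hy
      rw [abs_of_pos hy]
    have h3 : HasStrictDerivAt (fun y : ℝ => |y| ^ p) (p * x ^ (p - 1)) x :=
      (h1.hasStrictFDerivAt.congr_of_eventuallyEq hev.symm)
    convert h3 using 1
    rw [abs_of_pos hx]
    rw [show p - 1 = (p - 2) + 1 by ring, Real.rpow_add_one hne]
    ring


section Graph
variable {V : Type*} [Fintype V] (p : ℝ) (A : V → V → Prop) [DecidableRel A]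
  (ω : V → V → ℝ) (μ : V → ℝ) (h : V → ℝ) (c : ℝ)

/-- weights extended by zero off edges -/
noncomputable def Om : V → V → ℝ := fun i j => if A i j then ω i j else 0

variable {A ω}

lemma Om_symm (hA : Symmetric A) (hωsymm : ∀ i j, ω i j = ω j i) (i j : V) :
    Om A ω j i = Om A ω i j := by
  unfold Om
  by_cases hij : A i j
  · simp [hij, hA hij, hωsymm i j]
  · have h2 : ¬ A j i := fun hji => hij (hA hji)
    simp [hij, h2]

lemma Om_nonneg (hωpos : ∀ i j, A i j → 0 < ω i j) (i j : V) : 0 ≤ Om A ω i j := by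
  unfold Om; split_ifs with hij
  · exact (hωpos i j hij).le
  · exact le_refl 0

lemma sum_sum_antisymm (F : V → V → ℝ) (hF : ∀ i j, F j i = -F i j) :
    ∑ i, ∑ j, F i j = 0 := by
  have h1 : ∑ i, ∑ j, F i j = ∑ j, ∑ i, F i j := Finset.sum_comm
  have h2 : ∑ j : V, ∑ i : V, F i j = -∑ j : V, ∑ i : V, F j i := by
    rw [← Finset.sum_neg_distrib]
    refine Finset.sum_congr rfl fun j _ => ?_
    rw [← Finset.sum_neg_distrib]
    refine Finset.sum_congr rfl fun i _ => ?_
    exact hF j i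
  have h3 := h1.trans h2
  linarith

variable {μ}

lemma mu_pLap (hμ : ∀ i, 0 < μ i) (u : V → ℝ) (i : V) :
    μ i * pLap p A ω μ u i = ∑ j, Om A ω i j * |u j - u i| ^ (p - 2) * (u j - u i) := by
  unfold pLap
  rw [← mul_assoc, mul_one_div, div_self (hμ i).ne', one_mul]
  refine Finset.sum_congr rfl fun j _ => ?_
  unfold Om; split_ifs with hij <;> simp

lemma sum_mu_pLap_zero (hA : Symmetric A) (hωsymm : ∀ i j, ω i j = ω j i)
    (hμ : ∀ i, 0 < μ i) (u : V → ℝ) :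
    ∑ i, μ i * pLap p A ω μ u i = 0 := by
  calc ∑ i, μ i * pLap p A ω μ u i
      = ∑ i, ∑ j, Om A ω i j * |u j - u i| ^ (p - 2) * (u j - u i) :=
        Finset.sum_congr rfl fun i _ => mu_pLap p hμ u i
    _ = 0 := by
        apply sum_sum_antisymm
        intro i j
        rw [Om_symm hA hωsymm, abs_sub_comm (u i) (u j)]
        ring

end Graph



section Fcts
variable {V : Type*} [Fintype V] (p : ℝ) (A : V → V → Prop) [DecidableRel A]
  (ω : V → V → ℝ) (μ : V → ℝ) (h : V → ℝ) (c : ℝ)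

noncomputable def Dfun : (V → ℝ) → ℝ := fun u => ∑ i, ∑ j, Om A ω i j * |u j - u i| ^ p

noncomputable def Kfun : (V → ℝ) → ℝ :=
  fun u => 1 / (2 * p) * Dfun p A ω u + c * ∑ i, μ i * u i

noncomputable def Phi : (V → ℝ) → ℝ := fun u => ∑ i, μ i * h i * Real.exp (u i)

noncomputable def PhiD (u : V → ℝ) : (V → ℝ) →L[ℝ] ℝ :=
  ∑ i, (μ i * h i) • (Real.exp (u i) • (ContinuousLinearMap.proj i : (V → ℝ) →L[ℝ] ℝ))

noncomputable def KD (u : V → ℝ) : (V → ℝ) →L[ℝ] ℝ :=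
  (1 / (2 * p)) • (∑ i, ∑ j, (Om A ω i j) •
      ((p * |u j - u i| ^ (p - 2) * (u j - u i)) •
        ((ContinuousLinearMap.proj j : (V → ℝ) →L[ℝ] ℝ) - ContinuousLinearMap.proj i))) +
    c • (∑ i, (μ i) • (ContinuousLinearMap.proj i : (V → ℝ) →L[ℝ] ℝ))

set_option maxHeartbeats 1000000 in
lemma hasStrictFDerivAt_Phi (u : V → ℝ) :
    HasStrictFDerivAt (Phi μ h) (PhiD μ h u) u := by
  unfold Phi PhiD
  apply HasStrictFDerivAt.fun_sum
  intro i _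
  exact ((Real.hasStrictDerivAt_exp (u i)).comp_hasStrictFDerivAt u
    (ContinuousLinearMap.proj i : (V → ℝ) →L[ℝ] ℝ).hasStrictFDerivAt).const_mul (μ i * h i)

set_option maxHeartbeats 1000000 in
lemma hasStrictFDerivAt_Kfun (hp : 1 < p) (u : V → ℝ) :
    HasStrictFDerivAt (Kfun p A ω μ c) (KD p A ω μ c u) u := by
  unfold Kfun Dfun KD
  have h1 : HasStrictFDerivAt (fun u : V → ℝ => ∑ i, ∑ j, Om A ω i j * |u j - u i| ^ p)
      (∑ i, ∑ j, (Om A ω i j) •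
        ((p * |u j - u i| ^ (p - 2) * (u j - u i)) •
          ((ContinuousLinearMap.proj j : (V → ℝ) →L[ℝ] ℝ) - ContinuousLinearMap.proj i))) u := by
    apply HasStrictFDerivAt.fun_sum
    intro i _
    apply HasStrictFDerivAt.fun_sum
    intro j _
    exact ((hasStrictDerivAt_abs_rpow hp (u j - u i)).comp_hasStrictFDerivAt u
      ((ContinuousLinearMap.proj j : (V → ℝ) →L[ℝ] ℝ) -
        ContinuousLinearMap.proj i).hasStrictFDerivAt).const_mul (Om A ω i j)
  have h2 : HasStrictFDerivAt (fun u : V → ℝ => ∑ i, μ i * u i)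
      (∑ i, (μ i) • (ContinuousLinearMap.proj i : (V → ℝ) →L[ℝ] ℝ)) u := by
    apply HasStrictFDerivAt.fun_sum
    intro i _
    exact (ContinuousLinearMap.proj i : (V → ℝ) →L[ℝ] ℝ).hasStrictFDerivAt.const_mul (μ i)
  exact (h1.const_mul (1 / (2 * p))).add (h2.const_mul c)

end Fcts

section Eval
variable {V : Type*} [Fintype V] [DecidableEq V] (p : ℝ) {A : V → V → Prop} [DecidableRel A]
  {ω : V → V → ℝ} {μ : V → ℝ} (h : V → ℝ) (c : ℝ)


lemma PhiD_single (u : V → ℝ) (k : V) :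
    PhiD μ h u (Pi.single k 1) = μ k * h k * Real.exp (u k) := by
  unfold PhiD
  rw [ContinuousLinearMap.sum_apply]
  simp [ContinuousLinearMap.proj_apply, Pi.single_apply, mul_ite, Finset.sum_ite_eq]

lemma KD_single (hA : Symmetric A) (hωsymm : ∀ i j, ω i j = ω j i) (hμ : ∀ i, 0 < μ i)
    (hp : p ≠ 0) (u : V → ℝ) (k : V) :
    KD p A ω μ c u (Pi.single k 1) = -(μ k * pLap p A ω μ u k) + c * μ k := by
  set G : V → V → ℝ := fun i j => Om A ω i j * (p * |u j - u i| ^ (p - 2) * (u j - u i)) with hG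
  have hGanti : ∀ i j, G j i = -G i j := by
    intro i j
    simp only [hG]
    rw [Om_symm hA hωsymm, abs_sub_comm (u i) (u j)]
    ring
  have happly : KD p A ω μ c u (Pi.single k 1) =
      1 / (2 * p) * (∑ i, ∑ j, G i j * ((Pi.single k 1 : V → ℝ) j - (Pi.single k 1 : V → ℝ) i))
        + c * (∑ i, μ i * (Pi.single k 1 : V → ℝ) i) := by
    simp only [KD, ContinuousLinearMap.add_apply, ContinuousLinearMap.coe_smul',
      Pi.smul_apply, ContinuousLinearMap.sum_apply, ContinuousLinearMap.smul_apply,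
      ContinuousLinearMap.sub_apply, ContinuousLinearMap.proj_apply, smul_eq_mul, hG]
    congr 1
    congr 1
    refine Finset.sum_congr rfl fun i _ => Finset.sum_congr rfl fun j _ => ?_
    ring
  rw [happly]
  -- inner sums
  have hsum1 : ∀ i, ∑ j, G i j * ((Pi.single k 1 : V → ℝ) j - (Pi.single k 1 : V → ℝ) i)
      = G i k - (if i = k then (∑ j, G i j) else 0) := by
    intro i
    have e1 : ∑ j, G i j * ((Pi.single k 1 : V → ℝ) j - (Pi.single k 1 : V → ℝ) i)
        = (∑ j, G i j * (Pi.single k 1 : V → ℝ) j) - (∑ j, G i j) * (Pi.single k 1 : V → ℝ) i := by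
      rw [Finset.sum_mul, ← Finset.sum_sub_distrib]
      exact Finset.sum_congr rfl fun j _ => by ring
    rw [e1]
    congr 1
    · simp [Pi.single_apply, mul_ite]
    · simp [Pi.single_apply, mul_ite]
  have hsum2 : ∑ i, ∑ j, G i j * ((Pi.single k 1 : V → ℝ) j - (Pi.single k 1 : V → ℝ) i)
      = -(2 * ∑ j, G k j) := by
    rw [Finset.sum_congr rfl fun i _ => hsum1 i, Finset.sum_sub_distrib]
    have e2 : ∑ i, (if i = k then (∑ j, G i j) else 0) = ∑ j, G k j := by
      simp [Finset.sum_ite_eq]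
    have e3 : ∑ i, G i k = -∑ j, G k j := by
      rw [← Finset.sum_neg_distrib]
      exact Finset.sum_congr rfl fun i _ => by rw [hGanti k i]
    rw [e2, e3]
    ring
  have e4 : ∑ j, G k j = p * (μ k * pLap p A ω μ u k) := by
    rw [mu_pLap p hμ u k, Finset.mul_sum]
    exact Finset.sum_congr rfl fun j _ => by simp only [hG]; ring
  have e5 : ∑ i, μ i * (Pi.single k 1 : V → ℝ) i = μ k := by
    simp [Pi.single_apply, mul_ite]
  rw [hsum2, e4, e5]
  field_simp
end Eval
theorem exists_solution {V : Type*} [Fintype V] [Nonempty V] [DecidableEq V] (p : ℝ) (hp : 1 < p)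
    (A : V → V → Prop) [DecidableRel A] (hA : Symmetric A)
    (ω : V → V → ℝ) (hωsymm : ∀ i j, ω i j = ω j i) (hωpos : ∀ i j, A i j → 0 < ω i j)
    (μ : V → ℝ) (hμ : ∀ i, 0 < μ i)
    (hconn : ∀ i j : V, Relation.ReflTransGen A i j) (h : V → ℝ) (c : ℝ) (hc : 0 < c)
    (hpos : ∃ i, 0 < h i) :
    ∃ u : V → ℝ, ∀ i, pLap p A ω μ u i = c - h i * Real.exp (u i) := by
  classical
  obtain ⟨i0, hi0⟩ := hpos
  have hp0 : (0:ℝ) < p := lt_trans one_pos hp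
  have hip : (0:ℝ) < 1 / p := by positivity
  -- nonnegativity of the energy
  have Dnonneg : ∀ u : V → ℝ, 0 ≤ Dfun p A ω u := by
    intro u
    refine Finset.sum_nonneg fun i _ => Finset.sum_nonneg fun j _ => ?_
    exact mul_nonneg (Om_nonneg hωpos i j) (Real.rpow_nonneg (abs_nonneg _) p)
  -- single edge bound
  have edge_bound : ∀ a b : V, A a b → ∀ u : V → ℝ,
      |u b - u a| ≤ (1 / ω a b) ^ (1 / p) * Dfun p A ω u ^ (1 / p) := by
    intro a b hab u
    have hw : 0 < ω a b := hωpos a b hab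
    have h1 : Om A ω a b * |u b - u a| ^ p ≤ ∑ j, Om A ω a j * |u j - u a| ^ p :=
      Finset.single_le_sum
        (f := fun j => Om A ω a j * |u j - u a| ^ p)
        (fun j _ => mul_nonneg (Om_nonneg hωpos a j) (Real.rpow_nonneg (abs_nonneg _) p))
        (Finset.mem_univ b)
    have h2 : ∑ j, Om A ω a j * |u j - u a| ^ p ≤ Dfun p A ω u :=
      Finset.single_le_sum
        (f := fun i => ∑ j, Om A ω i j * |u j - u i| ^ p)
        (fun i _ => Finset.sum_nonneg fun j _ =>
          mul_nonneg (Om_nonneg hωpos i j) (Real.rpow_nonneg (abs_nonneg _) p))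
        (Finset.mem_univ a)
    have hOm : Om A ω a b = ω a b := by unfold Om; simp [hab]
    have h3 : |u b - u a| ^ p ≤ 1 / ω a b * Dfun p A ω u := by
      rw [hOm] at h1
      rw [one_div, inv_mul_eq_div, le_div_iff₀ hw]
      calc |u b - u a| ^ p * ω a b = ω a b * |u b - u a| ^ p := by ring
        _ ≤ Dfun p A ω u := le_trans h1 h2
    have h4 : (|u b - u a| ^ p) ^ (1 / p) ≤ (1 / ω a b * Dfun p A ω u) ^ (1 / p) :=
      Real.rpow_le_rpow (Real.rpow_nonneg (abs_nonneg _) p) h3 hip.le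
    rw [← Real.rpow_mul (abs_nonneg _), mul_one_div, div_self hp0.ne', Real.rpow_one] at h4
    rwa [Real.mul_rpow (by positivity) (Dnonneg u)] at h4
  -- oscillation bound along paths, per pair
  have osc : ∀ i j : V, ∃ C : ℝ, 0 ≤ C ∧ ∀ u : V → ℝ,
      |u j - u i| ≤ C * Dfun p A ω u ^ (1 / p) := by
    intro i j
    have H := hconn i j
    induction H with
    | refl => exact ⟨0, le_refl 0, fun u => by simp⟩
    | @tail b e hib hbe IH =>
      obtain ⟨C, hC0, hC⟩ := IH
      refine ⟨C + (1 / ω b e) ^ (1 / p), by have hw := hωpos b e hbe; positivity, fun u => ?_⟩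
      calc |u e - u i| ≤ |u e - u b| + |u b - u i| := abs_sub_le _ _ _
        _ ≤ (1 / ω b e) ^ (1 / p) * Dfun p A ω u ^ (1 / p) + C * Dfun p A ω u ^ (1 / p) :=
            add_le_add (edge_bound b e hbe u) (hC u)
        _ = (C + (1 / ω b e) ^ (1 / p)) * Dfun p A ω u ^ (1 / p) := by ring
  choose Cf hCf0 hCf using osc
  set Cm : ℝ := ∑ i, ∑ j, Cf i j with hCmdef
  have hCm0 : 0 ≤ Cm :=
    Finset.sum_nonneg fun i _ => Finset.sum_nonneg fun j _ => hCf0 i j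
  have hCmux : ∀ i j : V, Cf i j ≤ Cm := by
    intro i j
    calc Cf i j ≤ ∑ j', Cf i j' :=
          Finset.single_le_sum (fun j' _ => hCf0 i j') (Finset.mem_univ j)
      _ ≤ Cm := Finset.single_le_sum
          (f := fun i' => ∑ j', Cf i' j') (fun i' _ => Finset.sum_nonneg fun j' _ => hCf0 i' j')
          (Finset.mem_univ i)
  have oscb : ∀ (u : V → ℝ) (i j : V), |u j - u i| ≤ Cm * Dfun p A ω u ^ (1 / p) := by
    intro u i j
    exact le_trans (hCf i j u)
      (mul_le_mul_of_nonneg_right (hCmux i j) (Real.rpow_nonneg (Dnonneg u) _))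
  -- positive part mass
  set Hp : ℝ := ∑ i, μ i * max (h i) 0 with hHpdef
  have hHp : 0 < Hp := by
    refine Finset.sum_pos' (fun i _ => mul_nonneg (hμ i).le (le_max_right _ _)) ?_
    exact ⟨i0, Finset.mem_univ i0, by
      rw [max_eq_left hi0.le]; exact mul_pos (hμ i0) hi0⟩
  set L0 : ℝ := -Real.log Hp with hL0def
  -- max lower bound on the constraint set
  have maxlb : ∀ u : V → ℝ, Phi μ h u = 1 → ∃ k, L0 ≤ u k := by
    intro u hu
    obtain ⟨k, -, hk⟩ := Finset.exists_max_image Finset.univ u Finset.univ_nonempty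
    refine ⟨k, ?_⟩
    have h1 : (1:ℝ) ≤ Hp * Real.exp (u k) := by
      rw [← hu]
      unfold Phi
      rw [hHpdef, Finset.sum_mul]
      refine Finset.sum_le_sum fun i _ => ?_
      have hterm : h i * Real.exp (u i) ≤ max (h i) 0 * Real.exp (u k) := by
        rcases le_or_gt (h i) 0 with hh | hh
        · have : h i * Real.exp (u i) ≤ 0 :=
            mul_nonpos_of_nonpos_of_nonneg hh (Real.exp_nonneg _)
          exact this.trans (mul_nonneg (le_max_right _ _) (Real.exp_nonneg _))
        · have h2 : Real.exp (u i) ≤ Real.exp (u k) :=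
            Real.exp_le_exp.mpr (hk i (Finset.mem_univ i))
          have h3 : h i ≤ max (h i) 0 := le_max_left _ _
          exact mul_le_mul h3 h2 (Real.exp_nonneg _) (le_max_iff.mpr (Or.inr le_rfl))
      calc μ i * h i * Real.exp (u i) = μ i * (h i * Real.exp (u i)) := by ring
        _ ≤ μ i * (max (h i) 0 * Real.exp (u k)) :=
            mul_le_mul_of_nonneg_left hterm (hμ i).le
        _ = μ i * max (h i) 0 * Real.exp (u k) := by ring
    have h2 : 1 / Hp ≤ Real.exp (u k) := by
      rw [div_le_iff₀ hHp, mul_comm]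
      exact h1
    have h3 := Real.log_le_log (by positivity) h2
    rwa [Real.log_exp, one_div, Real.log_inv] at h3
  -- a base point on the constraint set
  have hS_nonempty : ∃ u0 : V → ℝ, Phi μ h u0 = 1 := by
    set Rest : ℝ := ∑ j ∈ Finset.univ.erase i0, μ j * h j with hRest
    have hmh : 0 < μ i0 * h i0 := mul_pos (hμ i0) hi0
    set t0 : ℝ := Real.log ((|Rest| + 1) / (μ i0 * h i0)) with ht0
    set v : V → ℝ := fun j => if j = i0 then t0 else 0 with hv
    have hPv : Phi μ h v = |Rest| + 1 + Rest := by
      unfold Phi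
      rw [← Finset.add_sum_erase _ _ (Finset.mem_univ i0)]
      have e1 : μ i0 * h i0 * Real.exp (v i0) = |Rest| + 1 := by
        have hvv : v i0 = t0 := by simp [hv]
        rw [hvv, ht0, Real.exp_log (by positivity)]
        field_simp
        exact div_self (hμ i0).ne'
      have e2 : ∑ j ∈ Finset.univ.erase i0, μ j * h j * Real.exp (v j) = Rest := by
        rw [hRest]
        refine Finset.sum_congr rfl fun j hj => ?_
        have hji : j ≠ i0 := Finset.ne_of_mem_erase hj
        simp [hv, hji]
      rw [e1, e2]
    have hPvpos : 0 < Phi μ h v := by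
      rw [hPv]
      have := abs_nonneg Rest
      have := neg_abs_le Rest
      linarith
    refine ⟨fun i => v i + -Real.log (Phi μ h v), ?_⟩
    have hshift : Phi μ h (fun i => v i + -Real.log (Phi μ h v))
        = Real.exp (-Real.log (Phi μ h v)) * Phi μ h v := by
      unfold Phi
      rw [Finset.mul_sum]
      refine Finset.sum_congr rfl fun i _ => ?_
      rw [Real.exp_add]; ring
    rw [hshift, Real.exp_neg, Real.exp_log hPvpos, inv_mul_cancel₀ hPvpos.ne']
  obtain ⟨u0, hu0⟩ := hS_nonempty
  set Mass : ℝ := ∑ i, μ i with hMassdef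
  have hMass : 0 < Mass := Finset.sum_pos (fun i _ => hμ i) Finset.univ_nonempty
  set B : ℝ := Kfun p A ω μ c u0 with hBdef
  set f : ℝ → ℝ := fun x => 1 / (2 * p) * x + c * Mass * L0 - c * Mass * Cm * x ^ (1 / p)
    with hfdef
  -- lower bound for K in terms of the energy
  have Klb : ∀ u : V → ℝ, Phi μ h u = 1 → f (Dfun p A ω u) ≤ Kfun p A ω μ c u := by
    intro u hu
    obtain ⟨k, hk⟩ := maxlb u hu
    have hti : ∀ i, L0 - Cm * Dfun p A ω u ^ (1 / p) ≤ u i := by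
      intro i
      have o := oscb u k i
      rw [abs_sub_comm] at o
      have h3 : u k - u i ≤ Cm * Dfun p A ω u ^ (1 / p) := (le_abs_self _).trans o
      linarith
    have hsum : Mass * (L0 - Cm * Dfun p A ω u ^ (1 / p)) ≤ ∑ i, μ i * u i := by
      rw [hMassdef, Finset.sum_mul]
      exact Finset.sum_le_sum fun i _ => mul_le_mul_of_nonneg_left (hti i) (hμ i).le
    have h5 := mul_le_mul_of_nonneg_left hsum hc.le
    simp only [hfdef]
    unfold Kfun
    nlinarith [h5]
  -- coercivity: the function f tends to infinity
  have hfatTop : Tendsto f atTop atTop := by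
    have hip1 : (0:ℝ) < 1 - 1 / p := by
      have : 1 / p < 1 := by rw [div_lt_one hp0]; exact hp
      linarith
    have t1 : Tendsto (fun x : ℝ => x ^ (1 / p)) atTop atTop := tendsto_rpow_atTop hip
    have t2 : Tendsto (fun x : ℝ => x ^ (1 - 1 / p) / (2 * p) + -(c * Mass * Cm)) atTop atTop :=
      tendsto_atTop_add_const_right _ _ ((tendsto_rpow_atTop hip1).atTop_div_const (by positivity))
    have t3 := t1.atTop_mul_atTop₀ t2
    have t4 := tendsto_atTop_add_const_right atTop (c * Mass * L0) t3
    apply t4.congr'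
    filter_upwards [eventually_gt_atTop (0:ℝ)] with x hx
    have hprod : x ^ (1 / p) * x ^ (1 - 1 / p) = x := by
      rw [← Real.rpow_add hx]
      norm_num
    simp only [hfdef]
    rw [mul_add, ← mul_div_assoc, hprod]
    ring
  obtain ⟨R0, hR0⟩ := Filter.eventually_atTop.mp (hfatTop.eventually_gt_atTop B)
  set R : ℝ := max R0 0 with hRdef
  have hRnn : (0:ℝ) ≤ R := le_max_right _ _
  have hDb : ∀ u : V → ℝ, Phi μ h u = 1 → Kfun p A ω μ c u ≤ B → Dfun p A ω u ≤ R := by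
    intro u h1 h2
    by_contra hcon
    push_neg at hcon
    have hge : R0 ≤ Dfun p A ω u := le_of_lt (lt_of_le_of_lt (le_max_left R0 0) hcon)
    have := hR0 (Dfun p A ω u) hge
    have := Klb u h1
    linarith
  -- box bounds
  set tR : ℝ := R ^ (1 / p) with htRdef
  set lo : ℝ := L0 - Cm * tR with hlodef
  set hi : V → ℝ := fun j => lo + (B / c - lo * Mass) / μ j with hhidef
  have hbox : ∀ u : V → ℝ, Phi μ h u = 1 → Kfun p A ω μ c u ≤ B →
      (fun _ : V => lo) ≤ u ∧ u ≤ hi := by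
    intro u h1 h2
    have hD := hDb u h1 h2
    have ht : Dfun p A ω u ^ (1 / p) ≤ tR := Real.rpow_le_rpow (Dnonneg u) hD hip.le
    obtain ⟨k, hk⟩ := maxlb u h1
    have hlo : ∀ i, lo ≤ u i := by
      intro i
      have o := oscb u k i
      rw [abs_sub_comm] at o
      have h3 : u k - u i ≤ Cm * Dfun p A ω u ^ (1 / p) := (le_abs_self _).trans o
      have h4 : Cm * Dfun p A ω u ^ (1 / p) ≤ Cm * tR := mul_le_mul_of_nonneg_left ht hCm0
      simp only [hlodef]
      linarith
    constructor
    · intro i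
      exact hlo i
    · intro j
      have hsumu : ∑ i, μ i * u i ≤ B / c := by
        have hD0 := Dnonneg u
        have h2' : 1 / (2 * p) * Dfun p A ω u + c * ∑ i, μ i * u i ≤ B := h2
        have hpos : 0 ≤ 1 / (2 * p) * Dfun p A ω u := by positivity
        rw [le_div_iff₀ hc, mul_comm]
        linarith
      have h5 : μ j * (u j - lo) ≤ ∑ i, μ i * (u i - lo) :=
        Finset.single_le_sum
          (f := fun i => μ i * (u i - lo))
          (fun i _ => mul_nonneg (hμ i).le (sub_nonneg.mpr (hlo i)))
          (Finset.mem_univ j)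
      have h6 : ∑ i, μ i * (u i - lo) = (∑ i, μ i * u i) - lo * Mass := by
        rw [hMassdef, Finset.mul_sum, ← Finset.sum_sub_distrib]
        exact Finset.sum_congr rfl fun i _ => by ring
      have h7 : μ j * (u j - lo) ≤ B / c - lo * Mass := by
        rw [h6] at h5
        exact h5.trans (sub_le_sub_right hsumu _)
      have h8 : u j - lo ≤ (B / c - lo * Mass) / μ j := by
        rw [le_div_iff₀ (hμ j), mul_comm]
        exact h7
      simp only [hhidef]
      linarith
  -- compact sublevel set and minimizer
  have contPhi : Continuous (Phi μ h) :=
    continuous_iff_continuousAt.mpr fun u => (hasStrictFDerivAt_Phi μ h u).continuousAt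
  have contK : Continuous (Kfun p A ω μ c) :=
    continuous_iff_continuousAt.mpr fun u => (hasStrictFDerivAt_Kfun p A ω μ c hp u).continuousAt
  set T : Set (V → ℝ) := {u | Phi μ h u = 1 ∧ Kfun p A ω μ c u ≤ B} with hTdef
  have hTclosed : IsClosed T :=
    (isClosed_eq contPhi continuous_const).inter (isClosed_le contK continuous_const)
  have hTsub : T ⊆ Set.Icc (fun _ : V => lo) hi := fun u hu =>
    Set.mem_Icc.mpr (hbox u hu.1 hu.2)
  have hTcompact : IsCompact T := (isCompact_Icc).of_isClosed_subset hTclosed hTsub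
  have hu0T : u0 ∈ T := ⟨hu0, le_refl _⟩
  obtain ⟨w, hwT, hwmin⟩ := hTcompact.exists_isMinOn ⟨u0, hu0T⟩ contK.continuousOn
  have hminS : ∀ u : V → ℝ, Phi μ h u = 1 → Kfun p A ω μ c w ≤ Kfun p A ω μ c u := by
    intro u hu
    rcases le_or_gt (Kfun p A ω μ c w) (Kfun p A ω μ c u) with hle | hlt
    · exact hle
    · have hwB : Kfun p A ω μ c w ≤ B := isMinOn_iff.mp hwmin u0 hu0T
      have huT : u ∈ T := ⟨hu, le_trans hlt.le hwB⟩
      have := isMinOn_iff.mp hwmin u huT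
      linarith
  -- Lagrange multipliers
  have hlocal : IsLocalExtrOn (Kfun p A ω μ c) {x | Phi μ h x = Phi μ h w} w := by
    left
    have hmin : IsMinOn (Kfun p A ω μ c) {x | Phi μ h x = Phi μ h w} w :=
      isMinOn_iff.mpr fun x hx => hminS x (by
        rw [Set.mem_setOf_eq] at hx
        rw [hx, hwT.1])
    exact hmin.filter_mono (le_principal_iff.mpr self_mem_nhdsWithin)
  obtain ⟨a, b, hab, hmul⟩ := hlocal.exists_multipliers_of_hasStrictFDerivAt_1d
    (hasStrictFDerivAt_Phi μ h w) (hasStrictFDerivAt_Kfun p A ω μ c hp w)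
  have heval : ∀ k, a * (μ k * h k * Real.exp (w k))
      + b * (-(μ k * pLap p A ω μ w k) + c * μ k) = 0 := by
    intro k
    have hk := DFunLike.congr_fun hmul (Pi.single k 1)
    simpa [ContinuousLinearMap.add_apply, ContinuousLinearMap.smul_apply, smul_eq_mul,
      PhiD_single, KD_single p c hA hωsymm hμ hp0.ne' w k] using hk
  have hb : b ≠ 0 := by
    intro hb0
    have ha : a ≠ 0 := by
      intro ha0
      exact hab (by rw [ha0, hb0]; rfl)
    have hv := heval i0
    rw [hb0] at hv
    have hne : (0:ℝ) < μ i0 * h i0 * Real.exp (w i0) :=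
      mul_pos (mul_pos (hμ i0) hi0) (Real.exp_pos _)
    have : a * (μ i0 * h i0 * Real.exp (w i0)) = 0 := by linarith
    exact ha ((mul_eq_zero.mp this).resolve_right hne.ne')
  -- summing the Euler-Lagrange equations
  have hsum0 : ∑ k, μ k * pLap p A ω μ w k = 0 := sum_mu_pLap_zero p hA hωsymm hμ w
  have hsum : a + b * (c * Mass) = 0 := by
    have e0 : ∑ k, (a * (μ k * h k * Real.exp (w k))
        + b * (-(μ k * pLap p A ω μ w k) + c * μ k)) = 0 :=
      Finset.sum_eq_zero fun k _ => heval k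
    have e1 : ∑ k, (a * (μ k * h k * Real.exp (w k))
        + b * (-(μ k * pLap p A ω μ w k) + c * μ k))
        = a * Phi μ h w + b * (-(∑ k, μ k * pLap p A ω μ w k) + c * Mass) := by
      unfold Phi
      rw [hMassdef, Finset.sum_add_distrib, ← Finset.mul_sum, ← Finset.mul_sum]
      congr 2
      rw [Finset.sum_add_distrib, ← Finset.sum_neg_distrib, ← Finset.mul_sum]
    rw [e1, hwT.1, hsum0] at e0
    simpa using e0
  set lam : ℝ := c * Mass with hlamdef
  have hlam : 0 < lam := mul_pos hc hMass
  have ha_eq : a = -(b * lam) := by linarith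
  have hplap : ∀ k, pLap p A ω μ w k = c - lam * (h k * Real.exp (w k)) := by
    intro k
    have hk := heval k
    rw [ha_eq] at hk
    have h2 : b * (-(lam * (μ k * h k * Real.exp (w k)))
        + (-(μ k * pLap p A ω μ w k) + c * μ k)) = 0 := by linear_combination hk
    have h3 := (mul_eq_zero.mp h2).resolve_left hb
    have h4 : μ k * (pLap p A ω μ w k - (c - lam * (h k * Real.exp (w k)))) = 0 := by
      linear_combination -h3
    have h5 := (mul_eq_zero.mp h4).resolve_left (hμ k).ne'
    exact sub_eq_zero.mp h5
  -- shift by log lam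
  refine ⟨fun i => w i + Real.log lam, fun i => ?_⟩
  have hplc : pLap p A ω μ (fun i => w i + Real.log lam) i = pLap p A ω μ w i := by
    unfold pLap
    simp only [add_sub_add_right_eq_sub]
  rw [hplc, hplap i]
  have hexp : Real.exp (w i + Real.log lam) = lam * Real.exp (w i) := by
    rw [Real.exp_add, Real.exp_log hlam]; ring
  rw [hexp]
  ring

/-- for `c > 0`, `Δ_p u = c - h e^u` is solvable iff `h` is positive somewhere. -/
theorem stmt14 {V : Type*} [Fintype V] [Nonempty V] (p : ℝ) (hp : 1 < p)
    (A : V → V → Prop) [DecidableRel A] (hA : Symmetric A)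
    (ω : V → V → ℝ) (hωsymm : ∀ i j, ω i j = ω j i) (hωpos : ∀ i j, A i j → 0 < ω i j)
    (μ : V → ℝ) (hμ : ∀ i, 0 < μ i)
    (hconn : ∀ i j : V, Relation.ReflTransGen A i j) (h : V → ℝ) (c : ℝ) (hc : 0 < c) :
    (∃ u : V → ℝ, ∀ i, pLap p A ω μ u i = c - h i * Real.exp (u i)) ↔ ∃ i, 0 < h i := by
  classical
  constructor
  · rintro ⟨u, hu⟩
    by_contra hcon
    push_neg at hcon
    have hz := sum_mu_pLap_zero p hA hωsymm hμ u
    have e : ∑ i, μ i * (c - h i * Real.exp (u i)) = 0 := by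
      rw [← hz]
      exact Finset.sum_congr rfl fun i _ => by rw [hu i]
    have e2 : ∑ i, (μ i * c - μ i * (h i * Real.exp (u i))) = 0 := by
      rw [← e]
      exact Finset.sum_congr rfl fun i _ => by ring
    rw [Finset.sum_sub_distrib] at e2
    have hle : ∑ i, μ i * (h i * Real.exp (u i)) ≤ 0 :=
      Finset.sum_nonpos fun i _ => mul_nonpos_of_nonneg_of_nonpos (hμ i).le
        (mul_nonpos_of_nonpos_of_nonneg (hcon i) (Real.exp_nonneg _))
    have hgt : 0 < ∑ i, μ i * c :=
      Finset.sum_pos (fun i _ => mul_pos (hμ i) hc) Finset.univ_nonempty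
    linarith
  · intro hpos
    exact exists_solution p hp A hA ω hωsymm hωpos μ hμ hconn h c hc hpos
end

section
/- Let c < 0. If the equation Δ_p u = c - h e^u has a solution u : V → ℝ, then the μ-average of h is negative: Σ_i μ_i h_i < 0. -/
open Finset Real

/-- for `c < 0`, solvability of `Δ_p u = c - h e^u` forces `∫_V h dμ < 0`. -/
theorem stmt15 {V : Type*} [Fintype V] [Nonempty V] (p : ℝ) (hp : 1 < p)
    (A : V → V → Prop) [DecidableRel A] (hA : Symmetric A)
    (ω : V → V → ℝ) (hωsymm : ∀ i j, ω i j = ω j i) (hωpos : ∀ i j, A i j → 0 < ω i j)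
    (μ : V → ℝ) (hμ : ∀ i, 0 < μ i)
    (hconn : ∀ i j : V, Relation.ReflTransGen A i j) (h : V → ℝ) (c : ℝ) (hc : c < 0)
    (hsol : ∃ u : V → ℝ, ∀ i, pLap p A ω μ u i = c - h i * Real.exp (u i)) :
    ∑ i, μ i * h i < 0 := by
  obtain ⟨u, hu⟩ := hsol
  set t : V → V → ℝ := fun i j =>
    if A i j then ω i j * |u j - u i| ^ (p - 2) * (u j - u i) * Real.exp (-u i) else 0 with ht
  -- Multiply the Laplacian by μᵢ e^{-uᵢ}
  have hS : ∀ i, μ i * Real.exp (-u i) * pLap p A ω μ u i = ∑ j, t i j := by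
    intro i
    have hμi : (μ i : ℝ) ≠ 0 := (hμ i).ne'
    simp only [pLap, ht]
    have h1 : μ i * Real.exp (-u i) *
        ((1 / μ i) * ∑ j, if A i j then ω i j * |u j - u i| ^ (p - 2) * (u j - u i) else 0)
        = Real.exp (-u i) *
          ∑ j, if A i j then ω i j * |u j - u i| ^ (p - 2) * (u j - u i) else 0 := by
      field_simp
    rw [h1, Finset.mul_sum]
    refine Finset.sum_congr rfl fun j _ => ?_
    split_ifs <;> ring
  -- The summed identity
  have hsum : ∑ i, μ i * Real.exp (-u i) * (c - h i * Real.exp (u i)) = ∑ i, ∑ j, t i j := by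
    refine Finset.sum_congr rfl fun i _ => ?_
    rw [← hu i, hS i]
  -- The double sum is nonnegative
  have hterm : ∀ i j, 0 ≤ t i j + t j i := by
    intro i j
    by_cases hij : A i j
    · have hji : A j i := hA hij
      simp only [ht, hij, hji, if_true]
      rw [hωsymm j i, abs_sub_comm (u i) (u j)]
      have hC : 0 ≤ ω i j * |u j - u i| ^ (p - 2) :=
        mul_nonneg (hωpos i j hij).le (Real.rpow_nonneg (abs_nonneg _) _)
      have hkey : 0 ≤ (u j - u i) * (Real.exp (-u i) - Real.exp (-u j)) := by
        rcases le_total (u i) (u j) with hle | hle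
        · exact mul_nonneg (by linarith) (by
            have := Real.exp_le_exp.2 (neg_le_neg hle)
            linarith)
        · have h1 : u j - u i ≤ 0 := by linarith
          have h2 : Real.exp (-u i) - Real.exp (-u j) ≤ 0 := by
            have := Real.exp_le_exp.2 (neg_le_neg hle)
            linarith
          exact mul_nonneg_of_nonpos_of_nonpos h1 h2
      nlinarith [mul_nonneg hC hkey]
    · have hji : ¬ A j i := fun contra => hij (hA contra)
      simp [ht, hij, hji]
  have hT : 0 ≤ ∑ i, ∑ j, t i j := by
    have hcomm : ∑ i, ∑ j, t j i = ∑ i, ∑ j, t i j := Finset.sum_comm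
    have h2 : ∑ i, ∑ j, (t i j + t j i) = 2 * ∑ i, ∑ j, t i j := by
      simp only [Finset.sum_add_distrib, hcomm]
      ring
    have h3 : 0 ≤ ∑ i, ∑ j, (t i j + t j i) :=
      Finset.sum_nonneg fun i _ => Finset.sum_nonneg fun j _ => hterm i j
    linarith
  -- Expand the left-hand side
  have hLHS : ∑ i, μ i * Real.exp (-u i) * (c - h i * Real.exp (u i))
      = c * (∑ i, μ i * Real.exp (-u i)) - ∑ i, μ i * h i := by
    rw [Finset.mul_sum, ← Finset.sum_sub_distrib]
    refine Finset.sum_congr rfl fun i _ => ?_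
    have hE : Real.exp (-u i) * Real.exp (u i) = 1 := by
      rw [← Real.exp_add]; simp
    linear_combination (-(μ i * h i)) * hE
  have hP : 0 < ∑ i, μ i * Real.exp (-u i) :=
    Finset.sum_pos (fun i _ => mul_pos (hμ i) (Real.exp_pos _)) Finset.univ_nonempty
  nlinarith [mul_neg_of_neg_of_pos hc hP]
end

section
/- (Upper and lower solution method) Let c < 0 and suppose there exist u₋, u₊ : V → ℝ with u₋ ≤ u₊ pointwise, Δ_p u₋ - c + h e^{u₋} ≥ 0 on V (lower solution), and Δ_p u₊ - c + h e^{u₊} ≤ 0 on V (upper solution). Then there exists a solution u of Δ_p u = c - h e^u with u₋ ≤ u ≤ u₊. -/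
open Finset Real

namespace S16

open Filter

noncomputable def phi (p s : ℝ) : ℝ := |s| ^ (p - 2) * s

lemma phi_zero (p : ℝ) : phi p 0 = 0 := by simp [phi]

lemma phi_neg (p s : ℝ) : phi p (-s) = - phi p s := by
  unfold phi; rw [abs_neg]; ring

lemma phi_of_pos {p s : ℝ} (hs : 0 < s) : phi p s = s ^ (p - 1) := by
  rw [phi, abs_of_pos hs, show p - 1 = (p - 2) + 1 by ring,
    Real.rpow_add_one (ne_of_gt hs)]

lemma phi_of_neg {p s : ℝ} (hs : s < 0) : phi p s = -((-s) ^ (p - 1)) := by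
  have h := phi_neg p (-s)
  rw [neg_neg] at h
  rw [h, phi_of_pos (by linarith)]

lemma phi_mono {p : ℝ} (hp : 1 < p) : Monotone (phi p) := by
  have hp1 : (0:ℝ) ≤ p - 1 := by linarith
  intro s t hst
  rcases lt_trichotomy s 0 with hs|hs|hs
  · rcases lt_trichotomy t 0 with ht|ht|ht
    · rw [phi_of_neg hs, phi_of_neg ht]
      have := Real.rpow_le_rpow (by linarith : (0:ℝ) ≤ -t) (by linarith : -t ≤ -s) hp1
      linarith
    · rw [phi_of_neg hs, ht, phi_zero]
      have := Real.rpow_nonneg (by linarith : (0:ℝ) ≤ -s) (p - 1)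
      linarith
    · rw [phi_of_neg hs, phi_of_pos ht]
      have h1 := Real.rpow_nonneg (by linarith : (0:ℝ) ≤ -s) (p - 1)
      have h2 := Real.rpow_nonneg (le_of_lt ht) (p - 1)
      linarith
  · subst hs
    rcases eq_or_lt_of_le hst with ht|ht
    · rw [← ht]
    · rw [phi_zero, phi_of_pos ht]
      exact Real.rpow_nonneg ht.le _
  · have ht : 0 < t := lt_of_lt_of_le hs hst
    rw [phi_of_pos hs, phi_of_pos ht]
    exact Real.rpow_le_rpow hs.le hst hp1

lemma hasDerivAt_abs_rpow {p : ℝ} (hp : 1 < p) (x : ℝ) :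
    HasDerivAt (fun y : ℝ => |y| ^ p) (p * phi p x) x := by
  rcases lt_trichotomy x 0 with hx|hx|hx
  · have hout : HasDerivAt (fun z : ℝ => z ^ p) (p * (-x) ^ (p-1)) (-x) :=
      Real.hasDerivAt_rpow_const (Or.inl (by linarith))
    have hin : HasDerivAt (fun y : ℝ => -y) (-1) x := (hasDerivAt_id x).neg
    have h1 := hout.comp x hin
    have heq : (fun y : ℝ => |y| ^ p) =ᶠ[nhds x] (fun y => (-y) ^ p) := by
      filter_upwards [Iio_mem_nhds hx] with y hy
      rw [abs_of_neg hy]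
    have h2 := h1.congr_of_eventuallyEq heq
    refine h2.congr_deriv ?_
    rw [phi_of_neg hx]; ring
  · subst hx
    rw [hasDerivAt_iff_tendsto_slope, phi_zero, mul_zero]
    have key : Filter.Tendsto (fun y : ℝ => |y| ^ (p-1)) (nhdsWithin (0:ℝ) {(0:ℝ)}ᶜ) (nhds 0) := by
      have hcont : Continuous fun y : ℝ => |y| ^ (p-1) :=
        continuous_abs.rpow_const (fun y => Or.inr (by linarith))
      have h0 : |(0:ℝ)| ^ (p-1) = 0 := by
        rw [abs_zero, Real.zero_rpow (by linarith : p - 1 ≠ 0)]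
      have := hcont.tendsto 0
      rw [h0] at this
      exact this.mono_left nhdsWithin_le_nhds
    refine squeeze_zero_norm ?_ key
    intro y
    rcases eq_or_ne y 0 with rfl|hy
    · simp [slope]
      positivity
    · rw [slope_def_field]
      have hay : (0:ℝ) < |y| := abs_pos.mpr hy
      rw [show |(0:ℝ)| ^ p = 0 by rw [abs_zero, Real.zero_rpow (by linarith : p ≠ 0)]]
      rw [sub_zero, sub_zero, norm_div, Real.norm_eq_abs, Real.norm_eq_abs,
        abs_of_nonneg (Real.rpow_nonneg (abs_nonneg y) p),
        Real.rpow_sub hay, Real.rpow_one]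
  · have hout : HasDerivAt (fun z : ℝ => z ^ p) (p * x ^ (p-1)) x :=
      Real.hasDerivAt_rpow_const (Or.inl (ne_of_gt hx))
    have heq : (fun y : ℝ => |y| ^ p) =ᶠ[nhds x] (fun y => y ^ p) := by
      filter_upwards [Ioi_mem_nhds hx] with y hy
      rw [abs_of_pos hy]
    have h2 := hout.congr_of_eventuallyEq heq
    refine h2.congr_deriv ?_
    rw [phi_of_pos hx]


lemma deriv_nonneg_right {g : ℝ → ℝ} {x b d : ℝ} (hg : HasDerivAt g d x)
    (hxb : x < b) (hmin : ∀ t, x ≤ t → t ≤ b → g x ≤ g t) : 0 ≤ d := by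
  have hd : HasDerivWithinAt g d (Set.Ioi x) x := hg.hasDerivWithinAt
  rw [hasDerivWithinAt_iff_tendsto_slope] at hd
  have hset : Set.Ioi x \ {x} = Set.Ioi x :=
    Set.diff_singleton_eq_self (by simp)
  rw [hset] at hd
  refine ge_of_tendsto hd ?_
  filter_upwards [Ioo_mem_nhdsGT_of_mem (Set.left_mem_Ico.mpr hxb)] with t ht
  rw [slope_def_field]
  apply div_nonneg
  · have := hmin t ht.1.le ht.2.le; linarith
  · linarith [ht.1]

lemma deriv_nonpos_left {g : ℝ → ℝ} {x a d : ℝ} (hg : HasDerivAt g d x)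
    (hax : a < x) (hmin : ∀ t, a ≤ t → t ≤ x → g x ≤ g t) : d ≤ 0 := by
  have hd : HasDerivWithinAt g d (Set.Iio x) x := hg.hasDerivWithinAt
  rw [hasDerivWithinAt_iff_tendsto_slope] at hd
  have hset : Set.Iio x \ {x} = Set.Iio x :=
    Set.diff_singleton_eq_self (by simp)
  rw [hset] at hd
  refine le_of_tendsto hd ?_
  filter_upwards [Ioo_mem_nhdsLT_of_mem (Set.right_mem_Ioc.mpr hax)] with t ht
  rw [slope_def_field]
  apply div_nonpos_of_nonneg_of_nonpos
  · have := hmin t ht.1.le ht.2.le; linarith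
  · linarith [ht.2]

end S16

open S16

/-- the method of upper and lower solutions for `Δ_p u = c - h e^u`, `c < 0`. -/
theorem stmt16 {V : Type*} [Fintype V] [Nonempty V] (p : ℝ) (hp : 1 < p)
    (A : V → V → Prop) [DecidableRel A] (hA : Symmetric A)
    (ω : V → V → ℝ) (hωsymm : ∀ i j, ω i j = ω j i) (hωpos : ∀ i j, A i j → 0 < ω i j)
    (μ : V → ℝ) (hμ : ∀ i, 0 < μ i)
    (hconn : ∀ i j : V, Relation.ReflTransGen A i j) (h : V → ℝ) (hbar : (∑ i, μ i * h i) / (∑ i, μ i) < 0)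
    (c : ℝ) (hc : c < 0) (um up : V → ℝ) (hle : ∀ i, um i ≤ up i)
    (hlower : ∀ i, 0 ≤ pLap p A ω μ um i - c + h i * Real.exp (um i))
    (hupper : ∀ i, pLap p A ω μ up i - c + h i * Real.exp (up i) ≤ 0) :
    ∃ u : V → ℝ, (∀ i, pLap p A ω μ u i = c - h i * Real.exp (u i)) ∧
      (∀ i, um i ≤ u i) ∧ (∀ i, u i ≤ up i) := by
  classical
  have hp0 : p ≠ 0 := by linarith
  set J : (V → ℝ) → ℝ := fun v =>
    (1 / (2 * p)) * ∑ i, ∑ j, (if A i j then ω i j * |v j - v i| ^ p else 0)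
      + ∑ i, μ i * (c * v i - h i * Real.exp (v i)) with hJdef
  have hJcont : Continuous J := by
    apply Continuous.add
    · apply continuous_const.mul
      apply continuous_finset_sum; intro i _
      apply continuous_finset_sum; intro j _
      by_cases hij : A i j
      · simp only [if_pos hij]
        exact continuous_const.mul
          (((continuous_apply j).sub (continuous_apply i)).abs.rpow_const
            (fun x => Or.inr (by linarith)))
      · simp only [if_neg hij]; exact continuous_const
    · apply continuous_finset_sum; intro i _
      exact continuous_const.mul ((continuous_const.mul (continuous_apply i)).sub
        (continuous_const.mul (Real.continuous_exp.comp (continuous_apply i))))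
  set K : Set (V → ℝ) := Set.univ.pi fun i => Set.Icc (um i) (up i) with hKdef
  have hKc : IsCompact K := isCompact_univ_pi fun i => isCompact_Icc
  have hKne : K.Nonempty := ⟨um, fun i _ => ⟨le_refl _, hle i⟩⟩
  obtain ⟨u, huK, humin'⟩ := hKc.exists_isMinOn hKne hJcont.continuousOn
  have humin : ∀ v ∈ K, J u ≤ J v := fun v hv => humin' hv
  have hu1 : ∀ i, um i ≤ u i := fun i => (huK i (Set.mem_univ i)).1
  have hu2 : ∀ i, u i ≤ up i := fun i => (huK i (Set.mem_univ i)).2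
  refine ⟨u, ?_, hu1, hu2⟩
  intro k
  -- per-term derivatives of the Dirichlet part
  have hterm : ∀ i j : V, HasDerivAt
      (fun t => if A i j then ω i j * |Function.update u k t j - Function.update u k t i| ^ p else 0)
      ((if A i j ∧ i = k ∧ j ≠ k then -(ω i j * (p * phi p (u j - u k))) else 0)
        + (if A i j ∧ j = k ∧ i ≠ k then ω i j * (p * phi p (u k - u i)) else 0)) (u k) := by
    intro i j
    by_cases hAij : A i j
    · simp only [if_pos hAij]
      by_cases hik : i = k
      · by_cases hjk : j = k
        · rw [hik, hjk]
          simp only [Function.update_self, sub_self, abs_zero, Real.zero_rpow hp0, mul_zero]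
          rw [if_neg (by tauto), if_neg (by tauto), add_zero]
          exact hasDerivAt_const _ _
        · rw [hik]
          simp only [Function.update_self, Function.update_of_ne hjk]
          have h1 : HasDerivAt (fun t : ℝ => u j - t) (-1) (u k) :=
            (hasDerivAt_id (u k)).const_sub (u j)
          have h2 := (hasDerivAt_abs_rpow hp (u j - u k)).comp (u k) h1
          have h3 := h2.const_mul (ω k j)
          rw [if_pos (by exact ⟨hik ▸ hAij, by trivial, hjk⟩), if_neg (by tauto), add_zero]
          refine h3.congr_deriv ?_
          ring
      · by_cases hjk : j = k
        · rw [hjk]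
          simp only [Function.update_self, Function.update_of_ne hik]
          have h1 : HasDerivAt (fun t : ℝ => t - u i) 1 (u k) :=
            (hasDerivAt_id (u k)).sub_const (u i)
          have h2 := (hasDerivAt_abs_rpow hp (u k - u i)).comp (u k) h1
          have h3 := h2.const_mul (ω i k)
          rw [if_neg (by tauto), if_pos (by exact ⟨hjk ▸ hAij, by trivial, hik⟩), zero_add]
          refine h3.congr_deriv ?_
          ring
        · simp only [Function.update_of_ne hik, Function.update_of_ne hjk]
          rw [if_neg (by tauto), if_neg (by tauto), add_zero]
          exact hasDerivAt_const _ _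
    · simp only [if_neg hAij]
      rw [if_neg (by tauto), if_neg (by tauto), add_zero]
      exact hasDerivAt_const _ _
  have hsum1 : HasDerivAt
      (fun t => ∑ i, ∑ j, if A i j then ω i j * |Function.update u k t j - Function.update u k t i| ^ p else 0)
      (∑ i, ∑ j, ((if A i j ∧ i = k ∧ j ≠ k then -(ω i j * (p * phi p (u j - u k))) else 0)
        + (if A i j ∧ j = k ∧ i ≠ k then ω i j * (p * phi p (u k - u i)) else 0))) (u k) :=
    HasDerivAt.fun_sum fun i _ => HasDerivAt.fun_sum fun j _ => hterm i j
  have hkey : ∀ i : V, HasDerivAt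
      (fun t => μ i * (c * Function.update u k t i - h i * Real.exp (Function.update u k t i)))
      (if i = k then μ k * (c - h k * Real.exp (u k)) else 0) (u k) := by
    intro i
    by_cases hik : i = k
    · rw [hik]
      simp only [Function.update_self]
      rw [if_pos trivial]
      have h1 : HasDerivAt (fun t : ℝ => c * t) c (u k) := by
        simpa using (hasDerivAt_id (u k)).const_mul c
      have h2 : HasDerivAt (fun t : ℝ => h k * Real.exp t) (h k * Real.exp (u k)) (u k) :=
        (Real.hasDerivAt_exp (u k)).const_mul (h k)
      exact (h1.sub h2).const_mul (μ k)
    · simp only [Function.update_of_ne hik]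
      rw [if_neg hik]
      exact hasDerivAt_const _ _
  have hsum2 : HasDerivAt
      (fun t => ∑ i, μ i * (c * Function.update u k t i - h i * Real.exp (Function.update u k t i)))
      (μ k * (c - h k * Real.exp (u k))) (u k) := by
    have h0 := HasDerivAt.fun_sum (fun i (_ : i ∈ Finset.univ) => hkey i)
    rwa [Finset.sum_ite_eq' Finset.univ k, if_pos (Finset.mem_univ k)] at h0
  have hT : (∑ i, ∑ j, ((if A i j ∧ i = k ∧ j ≠ k then -(ω i j * (p * phi p (u j - u k))) else 0)
        + (if A i j ∧ j = k ∧ i ≠ k then ω i j * (p * phi p (u k - u i)) else 0)))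
      = -(2 * p) * (μ k * pLap p A ω μ u k) := by
    have hTT : μ k * pLap p A ω μ u k
        = ∑ j, (if A k j then ω k j * |u j - u k| ^ (p - 2) * (u j - u k) else 0) := by
      simp only [pLap]
      rw [← mul_assoc, mul_one_div, div_self (hμ k).ne', one_mul]
    rw [hTT]
    simp only [Finset.sum_add_distrib]
    have hR : (∑ i, ∑ j, (if A i j ∧ i = k ∧ j ≠ k then -(ω i j * (p * phi p (u j - u k))) else 0))
        = -p * ∑ j, (if A k j then ω k j * |u j - u k| ^ (p - 2) * (u j - u k) else 0) := by
      have h1 : ∀ i : V, (∑ j, (if A i j ∧ i = k ∧ j ≠ k then -(ω i j * (p * phi p (u j - u k))) else 0))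
          = if i = k then (∑ j, (if A k j ∧ j ≠ k then -(ω k j * (p * phi p (u j - u k))) else 0)) else 0 := by
        intro i
        by_cases hik : i = k
        · rw [hik, if_pos rfl]
          refine Finset.sum_congr rfl fun j _ => ?_
          by_cases hc1 : A k j ∧ j ≠ k
          · rw [if_pos (by exact ⟨hc1.1, rfl, hc1.2⟩), if_pos hc1]
          · rw [if_neg (by tauto), if_neg hc1]
        · rw [if_neg hik]
          exact Finset.sum_eq_zero fun j _ => if_neg (by tauto)
      rw [Finset.sum_congr rfl fun i _ => h1 i, Finset.sum_ite_eq' Finset.univ k,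
        if_pos (Finset.mem_univ k), Finset.mul_sum]
      refine Finset.sum_congr rfl fun j _ => ?_
      by_cases hAkj : A k j
      · by_cases hjk : j = k
        · rw [if_neg (by tauto), hjk]
          simp [sub_self]
        · rw [if_pos ⟨hAkj, hjk⟩, if_pos hAkj]
          simp only [phi]
          ring
      · rw [if_neg (by tauto), if_neg hAkj, mul_zero]
    have hC : (∑ i, ∑ j, (if A i j ∧ j = k ∧ i ≠ k then ω i j * (p * phi p (u k - u i)) else 0))
        = -p * ∑ j, (if A k j then ω k j * |u j - u k| ^ (p - 2) * (u j - u k) else 0) := by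
      have h1 : ∀ i : V, (∑ j, (if A i j ∧ j = k ∧ i ≠ k then ω i j * (p * phi p (u k - u i)) else 0))
          = (if A i k ∧ i ≠ k then ω i k * (p * phi p (u k - u i)) else 0) := by
        intro i
        have h2 : ∀ j : V, (if A i j ∧ j = k ∧ i ≠ k then ω i j * (p * phi p (u k - u i)) else 0)
            = if j = k then (if A i k ∧ i ≠ k then ω i k * (p * phi p (u k - u i)) else 0) else 0 := by
          intro j
          by_cases hjk : j = k
          · rw [hjk, if_pos rfl]
            by_cases hc : A i k ∧ i ≠ k
            · rw [if_pos (by exact ⟨hc.1, rfl, hc.2⟩), if_pos hc]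
            · rw [if_neg (by tauto), if_neg hc]
          · rw [if_neg (by tauto), if_neg hjk]
        rw [Finset.sum_congr rfl fun j _ => h2 j, Finset.sum_ite_eq' Finset.univ k,
          if_pos (Finset.mem_univ k)]
      rw [Finset.sum_congr rfl fun i _ => h1 i, Finset.mul_sum]
      refine Finset.sum_congr rfl fun i _ => ?_
      by_cases hAik : A i k
      · by_cases hik : i = k
        · rw [if_neg (by tauto), hik]
          simp [sub_self]
        · rw [if_pos ⟨hAik, hik⟩, if_pos (hA hAik), hωsymm i k,
            show u k - u i = -(u i - u k) by ring, phi_neg]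
          simp only [phi]
          ring
      · rw [if_neg (by tauto), if_neg (fun hk => hAik (hA hk)), mul_zero]
    rw [hR, hC]
    ring
  have h5 : (1 / (2 * p)) * (∑ i, ∑ j, ((if A i j ∧ i = k ∧ j ≠ k then -(ω i j * (p * phi p (u j - u k))) else 0)
        + (if A i j ∧ j = k ∧ i ≠ k then ω i j * (p * phi p (u k - u i)) else 0)))
      + μ k * (c - h k * Real.exp (u k))
      = μ k * ((c - h k * Real.exp (u k)) - pLap p A ω μ u k) := by
    rw [hT]
    field_simp
    ring
  have hgood : HasDerivAt (fun t => J (Function.update u k t))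
      (μ k * ((c - h k * Real.exp (u k)) - pLap p A ω μ u k)) (u k) := by
    rw [← h5]
    simp only [hJdef]
    exact (hsum1.const_mul _).add hsum2
  have hminIcc : ∀ t, um k ≤ t → t ≤ up k → J u ≤ J (Function.update u k t) := by
    intro t h1 h2
    refine humin _ (fun i _ => ?_)
    by_cases hik : i = k
    · rw [hik, Function.update_self]; exact ⟨h1, h2⟩
    · rw [Function.update_of_ne hik]; exact ⟨hu1 i, hu2 i⟩
  have claim1 : pLap p A ω μ u k ≤ c - h k * Real.exp (u k) := by
    rcases lt_or_eq_of_le (hu2 k) with hlt|heq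
    · have hmin' : ∀ t, u k ≤ t → t ≤ up k →
          (fun t => J (Function.update u k t)) (u k) ≤ (fun t => J (Function.update u k t)) t := by
        intro t h1 h2
        simp only
        rw [Function.update_eq_self]
        exact hminIcc t (le_trans (hu1 k) h1) h2
      have hd := deriv_nonneg_right hgood hlt hmin'
      nlinarith [hμ k]
    · have hcomp : pLap p A ω μ u k ≤ pLap p A ω μ up k := by
        simp only [pLap]
        have hμk' := hμ k
        refine mul_le_mul_of_nonneg_left ?_ (by positivity)
        refine Finset.sum_le_sum fun j _ => ?_
        by_cases hAkj : A k j
        · rw [if_pos hAkj, if_pos hAkj, mul_assoc, mul_assoc]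
          refine mul_le_mul_of_nonneg_left ?_ (hωpos k j hAkj).le
          have h1 : u j - u k ≤ up j - up k := by
            have := hu2 j
            rw [heq]
            linarith
          exact phi_mono hp h1
        · rw [if_neg hAkj, if_neg hAkj]
      have h2 := hupper k
      rw [heq]
      linarith
  have claim2 : c - h k * Real.exp (u k) ≤ pLap p A ω μ u k := by
    rcases lt_or_eq_of_le (hu1 k) with hlt|heq
    · have hmin' : ∀ t, um k ≤ t → t ≤ u k →
          (fun t => J (Function.update u k t)) (u k) ≤ (fun t => J (Function.update u k t)) t := by
        intro t h1 h2
        simp only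
        rw [Function.update_eq_self]
        exact hminIcc t h1 (le_trans h2 (hu2 k))
      have hd := deriv_nonpos_left hgood hlt hmin'
      nlinarith [hμ k]
    · have hcomp : pLap p A ω μ um k ≤ pLap p A ω μ u k := by
        simp only [pLap]
        have hμk' := hμ k
        refine mul_le_mul_of_nonneg_left ?_ (by positivity)
        refine Finset.sum_le_sum fun j _ => ?_
        by_cases hAkj : A k j
        · rw [if_pos hAkj, if_pos hAkj, mul_assoc, mul_assoc]
          refine mul_le_mul_of_nonneg_left ?_ (hωpos k j hAkj).le
          have h1 : um j - um k ≤ u j - u k := by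
            have := hu1 j
            rw [heq]
            linarith
          exact phi_mono hp h1
        · rw [if_neg hAkj, if_neg hAkj]
      have h2 := hlower k
      rw [← heq]
      linarith
  linarith [claim1, claim2]
end
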